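/- arXiv:2603.26656 — 3 statements merged into one kernel-verified Lean document; each statement's English description precedes it below -/
import Mathlib

section
/- For every integer n with 1 ≤ n ≤ 7, the Euler characteristic of the clique complex of the partition graph G_n equals 1; that is, χ_n = Σ_{r≥1} (-1)^{r-1} c_r(n) = 1 for 1 ≤ n ≤ 7. -/
/-- `nu` is obtained from `lam` by decreasing a single part by 1
(deleting the part if it becomes 0). -/
def stepDown {n : ℕ} (lam : Nat.Partition n) (nu : Nat.Partition (n - 1)) : Prop :=
  ∃ k ∈ lam.parts, nu.parts = Multiset.filter (· ≠ 0) ((k - 1) ::ₘ lam.parts.erase k)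

/-- The partition graph `G_n`: vertices are the integer partitions of `n`, and two
distinct partitions are adjacent iff some partition of `n - 1` is obtained from
each of them by decreasing a single part by 1 (an elementary transfer of one cell). -/
def partitionGraph (n : ℕ) : SimpleGraph (Nat.Partition n) where
  Adj lam mu := lam ≠ mu ∧ ∃ nu : Nat.Partition (n - 1), stepDown lam nu ∧ stepDown mu nu
  symm := by
    constructor
    rintro a b ⟨hne, nu, ha, hb⟩
    exact ⟨hne.symm, nu, hb, ha⟩
  loopless := by
    constructor
    rintro a ⟨hne, _⟩
    exact hne rfl

/-- `cliqueCount n r = c_r(n)`, the number of cliques of size `r` in `G_n`. -/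
noncomputable def cliqueCount (n r : ℕ) : ℕ :=
  Set.ncard {s : Finset (Nat.Partition n) | (partitionGraph n).IsNClique r s}

/-- The Euler characteristic of the clique complex of `G_n`:
`χ_n = Σ_{r ≥ 1} (-1)^(r-1) c_r(n)` (a finite sum). -/
noncomputable def chi (n : ℕ) : ℤ :=
  ∑ᶠ r ∈ Set.Ici 1, (-1 : ℤ) ^ (r - 1) * (cliqueCount n r : ℤ)


set_option maxRecDepth 40000
set_option maxHeartbeats 1000000

instance {n : ℕ} (lam : Nat.Partition n) (nu : Nat.Partition (n - 1)) :
    Decidable (stepDown lam nu) :=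
  Multiset.decidableExistsMultiset

/-- multiset-level step-down relation. -/
def stepDownM (l m : Multiset ℕ) : Prop :=
  ∃ k ∈ l, m = Multiset.filter (· ≠ 0) ((k - 1) ::ₘ l.erase k)

instance (l m : Multiset ℕ) : Decidable (stepDownM l m) :=
  Multiset.decidableExistsMultiset

/-- decidable surrogate for adjacency given a complete list of partitions of `n-1`. -/
def AdjR {n m : ℕ} (Pf' : Finset (Nat.Partition m)) (a b : Nat.Partition n) : Prop :=
  a ≠ b ∧ ∃ nu ∈ Pf', stepDownM a.parts nu.parts ∧ stepDownM b.parts nu.parts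

instance {n m : ℕ} (Pf' : Finset (Nat.Partition m)) (a b : Nat.Partition n) :
    Decidable (AdjR Pf' a b) :=
  @instDecidableAnd _ _ _ (Finset.decidableExistsAndFinset)

lemma adj_iff {n : ℕ} (Pf' : Finset (Nat.Partition (n - 1))) (h' : ∀ q, q ∈ Pf')
    (a b : Nat.Partition n) : (partitionGraph n).Adj a b ↔ AdjR Pf' a b := by
  constructor
  · rintro ⟨hne, nu, h1, h2⟩; exact ⟨hne, nu, h' nu, h1, h2⟩
  · rintro ⟨hne, nu, _, h1, h2⟩; exact ⟨hne, nu, h1, h2⟩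

lemma partition_up {n : ℕ} (hn : 1 ≤ n) (p : Nat.Partition n) :
    ∃ (q : Nat.Partition (n - 1)) (k : ℕ),
      (k = 0 ∨ k ∈ q.parts) ∧ p.parts = (k + 1) ::ₘ q.parts.erase k := by
  have hne : p.parts ≠ 0 := by
    intro h
    have := p.parts_sum
    rw [h] at this
    simp at this
    omega
  obtain ⟨a, ha⟩ := Multiset.exists_mem_of_ne_zero hne
  have hapos : 0 < a := p.parts_pos ha
  have hsum : a + (p.parts.erase a).sum = n := by
    rw [← Multiset.sum_cons, Multiset.cons_erase ha]
    exact p.parts_sum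
  by_cases h1 : a = 1
  · refine ⟨⟨p.parts.erase a, ?_, ?_⟩, 0, Or.inl rfl, ?_⟩
    · intro i hi; exact p.parts_pos (Multiset.mem_of_mem_erase hi)
    · omega
    · show p.parts = (0 + 1) ::ₘ (p.parts.erase a).erase 0
      rw [Multiset.erase_of_notMem (fun h0 => by
        have := p.parts_pos (Multiset.mem_of_mem_erase h0); omega)]
      subst h1
      exact (Multiset.cons_erase ha).symm
  · refine ⟨⟨(a - 1) ::ₘ p.parts.erase a, ?_, ?_⟩, a - 1,
      Or.inr (Multiset.mem_cons_self _ _), ?_⟩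
    · intro i hi
      rcases Multiset.mem_cons.1 hi with rfl | h
      · omega
      · exact p.parts_pos (Multiset.mem_of_mem_erase h)
    · rw [Multiset.sum_cons]; omega
    · show p.parts = (a - 1 + 1) ::ₘ ((a - 1) ::ₘ p.parts.erase a).erase (a - 1)
      rw [Multiset.erase_cons_head]
      have hh : a - 1 + 1 = a := by omega
      rw [hh]
      exact (Multiset.cons_erase ha).symm

lemma compl_step {n : ℕ} (Pf' : Finset (Nat.Partition n)) (Pf : Finset (Nat.Partition (n + 1)))
    (h' : ∀ q, q ∈ Pf')
    (hstep : ∀ q : Pf', ∀ k ∈ (0 ::ₘ (q : Nat.Partition n).parts),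
      ∃ p' ∈ Pf, p'.parts = (k + 1) ::ₘ (q : Nat.Partition n).parts.erase k) :
    ∀ p : Nat.Partition (n + 1), p ∈ Pf := by
  intro p
  obtain ⟨q, k, hk, hp⟩ := partition_up (n := n + 1) (by omega) p
  obtain ⟨p', hp', hpp⟩ := hstep ⟨q, h' q⟩ k (by
    rcases hk with rfl | h
    · exact Multiset.mem_cons_self _ _
    · exact Multiset.mem_cons_of_mem h)
  have : p = p' := Nat.Partition.ext (hp.trans hpp.symm)
  rwa [this]

lemma master {n : ℕ} (CL : Finset (Finset (Nat.Partition n)))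
    (h1 : ∀ v, {v} ∈ CL)
    (h2 : ∀ t ∈ CL, ∀ a, a ∉ t → (∀ b ∈ t, (partitionGraph n).Adj a b) → insert a t ∈ CL) :
    ∀ s : Finset (Nat.Partition n), s.Nonempty → (partitionGraph n).IsClique ↑s → s ∈ CL := by
  intro s hs
  induction hs using Finset.Nonempty.cons_induction with
  | singleton a => intro _; exact h1 a
  | cons a s ha hs ih =>
    intro hcl
    have hscl : (partitionGraph n).IsClique ↑s := hcl.subset (by simp)
    have hadj : ∀ b ∈ s, (partitionGraph n).Adj a b := fun b hb =>
      hcl (by simp) (by simp [hb]) (fun h => ha (h ▸ hb))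
    have := h2 s (ih hscl) a ha hadj
    rwa [Finset.cons_eq_insert]

lemma cliqueSet_eq {n : ℕ} (CL : Finset (Finset (Nat.Partition n)))
    (h1 : ∀ v, {v} ∈ CL)
    (h2 : ∀ t ∈ CL, ∀ a, a ∉ t → (∀ b ∈ t, (partitionGraph n).Adj a b) → insert a t ∈ CL)
    (h3 : ∀ s ∈ CL, (partitionGraph n).IsNClique s.card s)
    (r : ℕ) (hr : 1 ≤ r) :
    {s | (partitionGraph n).IsNClique r s} = ↑(CL.filter fun s => s.card = r) := by
  ext s
  simp only [Set.mem_setOf_eq, Finset.coe_filter, Set.mem_setOf_eq]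
  constructor
  · intro h
    have hcard : s.card = r := h.card_eq
    have hne : s.Nonempty := Finset.card_pos.mp (by omega)
    exact ⟨master CL h1 h2 s hne h.isClique, hcard⟩
  · rintro ⟨hs, hcard⟩
    have := h3 s hs
    rwa [hcard] at this

lemma chi_eq {n : ℕ} (CL : Finset (Finset (Nat.Partition n)))
    (h1 : ∀ v, {v} ∈ CL)
    (h2 : ∀ t ∈ CL, ∀ a, a ∉ t → (∀ b ∈ t, (partitionGraph n).Adj a b) → insert a t ∈ CL)
    (h3 : ∀ s ∈ CL, (partitionGraph n).IsNClique s.card s)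
    (hmax : ∀ s ∈ CL, s.card ≤ 4)
    (hsum : ∑ r ∈ Finset.Icc 1 4,
      (-1 : ℤ) ^ (r - 1) * ((CL.filter fun s => s.card = r).card : ℤ) = 1) :
    chi n = 1 := by
  have hcc : ∀ r, 1 ≤ r → cliqueCount n r = (CL.filter fun s => s.card = r).card := by
    intro r hr
    rw [cliqueCount, cliqueSet_eq CL h1 h2 h3 r hr, Set.ncard_coe_finset]
  have h0 : ∀ r, 5 ≤ r → cliqueCount n r = 0 := by
    intro r hr
    rw [hcc r (by omega), Finset.card_eq_zero, Finset.filter_eq_empty_iff]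
    intro s hs h
    have := hmax s hs
    omega
  rw [chi, finsum_mem_eq_sum_of_inter_support_eq _
    (t := Finset.Icc 1 4) ?_]
  · refine (Finset.sum_congr rfl fun r hr => ?_).trans hsum
    rw [hcc r (Finset.mem_Icc.mp hr).1]
  · ext r
    simp only [Set.mem_inter_iff, Set.mem_Ici, Function.mem_support, Finset.coe_Icc,
      Set.mem_Icc, ne_eq]
    constructor
    · rintro ⟨hr, hne⟩
      refine ⟨⟨hr, ?_⟩, hne⟩
      by_contra h
      exact hne (by rw [h0 r (by omega)]; ring)
    · rintro ⟨⟨hr, _⟩, hne⟩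
      exact ⟨hr, hne⟩

def P0_0 : Nat.Partition 0 := ⟨(0 : Multiset ℕ), by decide, by decide⟩
def Pf0 : Finset (Nat.Partition 0) := ⟨↑[P0_0], by decide⟩
def P1_0 : Nat.Partition 1 := ⟨{1}, by decide, by decide⟩
def Pf1 : Finset (Nat.Partition 1) := ⟨↑[P1_0], by decide⟩
def P2_0 : Nat.Partition 2 := ⟨{2}, by decide, by decide⟩
def P2_1 : Nat.Partition 2 := ⟨{1,1}, by decide, by decide⟩
def Pf2 : Finset (Nat.Partition 2) := ⟨↑[P2_0, P2_1], by decide⟩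
def P3_0 : Nat.Partition 3 := ⟨{3}, by decide, by decide⟩
def P3_1 : Nat.Partition 3 := ⟨{2,1}, by decide, by decide⟩
def P3_2 : Nat.Partition 3 := ⟨{1,1,1}, by decide, by decide⟩
def Pf3 : Finset (Nat.Partition 3) := ⟨↑[P3_0, P3_1, P3_2], by decide⟩
def P4_0 : Nat.Partition 4 := ⟨{4}, by decide, by decide⟩
def P4_1 : Nat.Partition 4 := ⟨{3,1}, by decide, by decide⟩
def P4_2 : Nat.Partition 4 := ⟨{2,2}, by decide, by decide⟩
def P4_3 : Nat.Partition 4 := ⟨{2,1,1}, by decide, by decide⟩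
def P4_4 : Nat.Partition 4 := ⟨{1,1,1,1}, by decide, by decide⟩
def Pf4 : Finset (Nat.Partition 4) := ⟨↑[P4_0, P4_1, P4_2, P4_3, P4_4], by decide⟩
def P5_0 : Nat.Partition 5 := ⟨{5}, by decide, by decide⟩
def P5_1 : Nat.Partition 5 := ⟨{4,1}, by decide, by decide⟩
def P5_2 : Nat.Partition 5 := ⟨{3,2}, by decide, by decide⟩
def P5_3 : Nat.Partition 5 := ⟨{3,1,1}, by decide, by decide⟩
def P5_4 : Nat.Partition 5 := ⟨{2,2,1}, by decide, by decide⟩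
def P5_5 : Nat.Partition 5 := ⟨{2,1,1,1}, by decide, by decide⟩
def P5_6 : Nat.Partition 5 := ⟨{1,1,1,1,1}, by decide, by decide⟩
def Pf5 : Finset (Nat.Partition 5) := ⟨↑[P5_0, P5_1, P5_2, P5_3, P5_4, P5_5, P5_6], by decide⟩
def P6_0 : Nat.Partition 6 := ⟨{6}, by decide, by decide⟩
def P6_1 : Nat.Partition 6 := ⟨{5,1}, by decide, by decide⟩
def P6_2 : Nat.Partition 6 := ⟨{4,2}, by decide, by decide⟩
def P6_3 : Nat.Partition 6 := ⟨{4,1,1}, by decide, by decide⟩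
def P6_4 : Nat.Partition 6 := ⟨{3,3}, by decide, by decide⟩
def P6_5 : Nat.Partition 6 := ⟨{3,2,1}, by decide, by decide⟩
def P6_6 : Nat.Partition 6 := ⟨{3,1,1,1}, by decide, by decide⟩
def P6_7 : Nat.Partition 6 := ⟨{2,2,2}, by decide, by decide⟩
def P6_8 : Nat.Partition 6 := ⟨{2,2,1,1}, by decide, by decide⟩
def P6_9 : Nat.Partition 6 := ⟨{2,1,1,1,1}, by decide, by decide⟩
def P6_10 : Nat.Partition 6 := ⟨{1,1,1,1,1,1}, by decide, by decide⟩
def Pf6 : Finset (Nat.Partition 6) := ⟨↑[P6_0, P6_1, P6_2, P6_3, P6_4, P6_5, P6_6, P6_7, P6_8, P6_9, P6_10], by decide⟩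
def P7_0 : Nat.Partition 7 := ⟨{7}, by decide, by decide⟩
def P7_1 : Nat.Partition 7 := ⟨{6,1}, by decide, by decide⟩
def P7_2 : Nat.Partition 7 := ⟨{5,2}, by decide, by decide⟩
def P7_3 : Nat.Partition 7 := ⟨{5,1,1}, by decide, by decide⟩
def P7_4 : Nat.Partition 7 := ⟨{4,3}, by decide, by decide⟩
def P7_5 : Nat.Partition 7 := ⟨{4,2,1}, by decide, by decide⟩
def P7_6 : Nat.Partition 7 := ⟨{4,1,1,1}, by decide, by decide⟩
def P7_7 : Nat.Partition 7 := ⟨{3,3,1}, by decide, by decide⟩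
def P7_8 : Nat.Partition 7 := ⟨{3,2,2}, by decide, by decide⟩
def P7_9 : Nat.Partition 7 := ⟨{3,2,1,1}, by decide, by decide⟩
def P7_10 : Nat.Partition 7 := ⟨{3,1,1,1,1}, by decide, by decide⟩
def P7_11 : Nat.Partition 7 := ⟨{2,2,2,1}, by decide, by decide⟩
def P7_12 : Nat.Partition 7 := ⟨{2,2,1,1,1}, by decide, by decide⟩
def P7_13 : Nat.Partition 7 := ⟨{2,1,1,1,1,1}, by decide, by decide⟩
def P7_14 : Nat.Partition 7 := ⟨{1,1,1,1,1,1,1}, by decide, by decide⟩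
def Pf7 : Finset (Nat.Partition 7) := ⟨↑[P7_0, P7_1, P7_2, P7_3, P7_4, P7_5, P7_6, P7_7, P7_8, P7_9, P7_10, P7_11, P7_12, P7_13, P7_14], by decide⟩
def CL1 : Finset (Finset (Nat.Partition 1)) := ⟨↑[
  (⟨↑[P1_0], by decide⟩ : Finset (Nat.Partition 1))], by decide⟩
def CL2 : Finset (Finset (Nat.Partition 2)) := ⟨↑[
  (⟨↑[P2_0], by decide⟩ : Finset (Nat.Partition 2)),
  (⟨↑[P2_0, P2_1], by decide⟩ : Finset (Nat.Partition 2)),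
  (⟨↑[P2_1], by decide⟩ : Finset (Nat.Partition 2))], by decide⟩
def CL3 : Finset (Finset (Nat.Partition 3)) := ⟨↑[
  (⟨↑[P3_0], by decide⟩ : Finset (Nat.Partition 3)),
  (⟨↑[P3_0, P3_1], by decide⟩ : Finset (Nat.Partition 3)),
  (⟨↑[P3_1], by decide⟩ : Finset (Nat.Partition 3)),
  (⟨↑[P3_1, P3_2], by decide⟩ : Finset (Nat.Partition 3)),
  (⟨↑[P3_2], by decide⟩ : Finset (Nat.Partition 3))], by decide⟩
def CL4 : Finset (Finset (Nat.Partition 4)) := ⟨↑[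
  (⟨↑[P4_0], by decide⟩ : Finset (Nat.Partition 4)),
  (⟨↑[P4_0, P4_1], by decide⟩ : Finset (Nat.Partition 4)),
  (⟨↑[P4_1], by decide⟩ : Finset (Nat.Partition 4)),
  (⟨↑[P4_1, P4_2], by decide⟩ : Finset (Nat.Partition 4)),
  (⟨↑[P4_1, P4_2, P4_3], by decide⟩ : Finset (Nat.Partition 4)),
  (⟨↑[P4_1, P4_3], by decide⟩ : Finset (Nat.Partition 4)),
  (⟨↑[P4_2], by decide⟩ : Finset (Nat.Partition 4)),
  (⟨↑[P4_2, P4_3], by decide⟩ : Finset (Nat.Partition 4)),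
  (⟨↑[P4_3], by decide⟩ : Finset (Nat.Partition 4)),
  (⟨↑[P4_3, P4_4], by decide⟩ : Finset (Nat.Partition 4)),
  (⟨↑[P4_4], by decide⟩ : Finset (Nat.Partition 4))], by decide⟩
def CL5 : Finset (Finset (Nat.Partition 5)) := ⟨↑[
  (⟨↑[P5_0], by decide⟩ : Finset (Nat.Partition 5)),
  (⟨↑[P5_0, P5_1], by decide⟩ : Finset (Nat.Partition 5)),
  (⟨↑[P5_1], by decide⟩ : Finset (Nat.Partition 5)),
  (⟨↑[P5_1, P5_2], by decide⟩ : Finset (Nat.Partition 5)),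
  (⟨↑[P5_1, P5_2, P5_3], by decide⟩ : Finset (Nat.Partition 5)),
  (⟨↑[P5_1, P5_3], by decide⟩ : Finset (Nat.Partition 5)),
  (⟨↑[P5_2], by decide⟩ : Finset (Nat.Partition 5)),
  (⟨↑[P5_2, P5_3], by decide⟩ : Finset (Nat.Partition 5)),
  (⟨↑[P5_2, P5_3, P5_4], by decide⟩ : Finset (Nat.Partition 5)),
  (⟨↑[P5_2, P5_4], by decide⟩ : Finset (Nat.Partition 5)),
  (⟨↑[P5_3], by decide⟩ : Finset (Nat.Partition 5)),
  (⟨↑[P5_3, P5_4], by decide⟩ : Finset (Nat.Partition 5)),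
  (⟨↑[P5_3, P5_4, P5_5], by decide⟩ : Finset (Nat.Partition 5)),
  (⟨↑[P5_3, P5_5], by decide⟩ : Finset (Nat.Partition 5)),
  (⟨↑[P5_4], by decide⟩ : Finset (Nat.Partition 5)),
  (⟨↑[P5_4, P5_5], by decide⟩ : Finset (Nat.Partition 5)),
  (⟨↑[P5_5], by decide⟩ : Finset (Nat.Partition 5)),
  (⟨↑[P5_5, P5_6], by decide⟩ : Finset (Nat.Partition 5)),
  (⟨↑[P5_6], by decide⟩ : Finset (Nat.Partition 5))], by decide⟩
def CL6 : Finset (Finset (Nat.Partition 6)) := ⟨↑[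
  (⟨↑[P6_0], by decide⟩ : Finset (Nat.Partition 6)),
  (⟨↑[P6_0, P6_1], by decide⟩ : Finset (Nat.Partition 6)),
  (⟨↑[P6_1], by decide⟩ : Finset (Nat.Partition 6)),
  (⟨↑[P6_1, P6_2], by decide⟩ : Finset (Nat.Partition 6)),
  (⟨↑[P6_1, P6_2, P6_3], by decide⟩ : Finset (Nat.Partition 6)),
  (⟨↑[P6_1, P6_3], by decide⟩ : Finset (Nat.Partition 6)),
  (⟨↑[P6_2], by decide⟩ : Finset (Nat.Partition 6)),
  (⟨↑[P6_2, P6_3], by decide⟩ : Finset (Nat.Partition 6)),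
  (⟨↑[P6_2, P6_3, P6_5], by decide⟩ : Finset (Nat.Partition 6)),
  (⟨↑[P6_2, P6_4], by decide⟩ : Finset (Nat.Partition 6)),
  (⟨↑[P6_2, P6_4, P6_5], by decide⟩ : Finset (Nat.Partition 6)),
  (⟨↑[P6_2, P6_5], by decide⟩ : Finset (Nat.Partition 6)),
  (⟨↑[P6_3], by decide⟩ : Finset (Nat.Partition 6)),
  (⟨↑[P6_3, P6_5], by decide⟩ : Finset (Nat.Partition 6)),
  (⟨↑[P6_3, P6_5, P6_6], by decide⟩ : Finset (Nat.Partition 6)),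
  (⟨↑[P6_3, P6_6], by decide⟩ : Finset (Nat.Partition 6)),
  (⟨↑[P6_4], by decide⟩ : Finset (Nat.Partition 6)),
  (⟨↑[P6_4, P6_5], by decide⟩ : Finset (Nat.Partition 6)),
  (⟨↑[P6_5], by decide⟩ : Finset (Nat.Partition 6)),
  (⟨↑[P6_5, P6_6], by decide⟩ : Finset (Nat.Partition 6)),
  (⟨↑[P6_5, P6_6, P6_8], by decide⟩ : Finset (Nat.Partition 6)),
  (⟨↑[P6_5, P6_7], by decide⟩ : Finset (Nat.Partition 6)),
  (⟨↑[P6_5, P6_7, P6_8], by decide⟩ : Finset (Nat.Partition 6)),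
  (⟨↑[P6_5, P6_8], by decide⟩ : Finset (Nat.Partition 6)),
  (⟨↑[P6_6], by decide⟩ : Finset (Nat.Partition 6)),
  (⟨↑[P6_6, P6_8], by decide⟩ : Finset (Nat.Partition 6)),
  (⟨↑[P6_6, P6_8, P6_9], by decide⟩ : Finset (Nat.Partition 6)),
  (⟨↑[P6_6, P6_9], by decide⟩ : Finset (Nat.Partition 6)),
  (⟨↑[P6_7], by decide⟩ : Finset (Nat.Partition 6)),
  (⟨↑[P6_7, P6_8], by decide⟩ : Finset (Nat.Partition 6)),
  (⟨↑[P6_8], by decide⟩ : Finset (Nat.Partition 6)),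
  (⟨↑[P6_8, P6_9], by decide⟩ : Finset (Nat.Partition 6)),
  (⟨↑[P6_9], by decide⟩ : Finset (Nat.Partition 6)),
  (⟨↑[P6_9, P6_10], by decide⟩ : Finset (Nat.Partition 6)),
  (⟨↑[P6_10], by decide⟩ : Finset (Nat.Partition 6))], by decide⟩
def CL7 : Finset (Finset (Nat.Partition 7)) := ⟨↑[
  (⟨↑[P7_0], by decide⟩ : Finset (Nat.Partition 7)),
  (⟨↑[P7_0, P7_1], by decide⟩ : Finset (Nat.Partition 7)),
  (⟨↑[P7_1], by decide⟩ : Finset (Nat.Partition 7)),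
  (⟨↑[P7_1, P7_2], by decide⟩ : Finset (Nat.Partition 7)),
  (⟨↑[P7_1, P7_2, P7_3], by decide⟩ : Finset (Nat.Partition 7)),
  (⟨↑[P7_1, P7_3], by decide⟩ : Finset (Nat.Partition 7)),
  (⟨↑[P7_2], by decide⟩ : Finset (Nat.Partition 7)),
  (⟨↑[P7_2, P7_3], by decide⟩ : Finset (Nat.Partition 7)),
  (⟨↑[P7_2, P7_3, P7_5], by decide⟩ : Finset (Nat.Partition 7)),
  (⟨↑[P7_2, P7_4], by decide⟩ : Finset (Nat.Partition 7)),
  (⟨↑[P7_2, P7_4, P7_5], by decide⟩ : Finset (Nat.Partition 7)),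
  (⟨↑[P7_2, P7_5], by decide⟩ : Finset (Nat.Partition 7)),
  (⟨↑[P7_3], by decide⟩ : Finset (Nat.Partition 7)),
  (⟨↑[P7_3, P7_5], by decide⟩ : Finset (Nat.Partition 7)),
  (⟨↑[P7_3, P7_5, P7_6], by decide⟩ : Finset (Nat.Partition 7)),
  (⟨↑[P7_3, P7_6], by decide⟩ : Finset (Nat.Partition 7)),
  (⟨↑[P7_4], by decide⟩ : Finset (Nat.Partition 7)),
  (⟨↑[P7_4, P7_5], by decide⟩ : Finset (Nat.Partition 7)),
  (⟨↑[P7_4, P7_5, P7_7], by decide⟩ : Finset (Nat.Partition 7)),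
  (⟨↑[P7_4, P7_7], by decide⟩ : Finset (Nat.Partition 7)),
  (⟨↑[P7_5], by decide⟩ : Finset (Nat.Partition 7)),
  (⟨↑[P7_5, P7_6], by decide⟩ : Finset (Nat.Partition 7)),
  (⟨↑[P7_5, P7_6, P7_9], by decide⟩ : Finset (Nat.Partition 7)),
  (⟨↑[P7_5, P7_7], by decide⟩ : Finset (Nat.Partition 7)),
  (⟨↑[P7_5, P7_7, P7_8], by decide⟩ : Finset (Nat.Partition 7)),
  (⟨↑[P7_5, P7_7, P7_8, P7_9], by decide⟩ : Finset (Nat.Partition 7)),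
  (⟨↑[P7_5, P7_7, P7_9], by decide⟩ : Finset (Nat.Partition 7)),
  (⟨↑[P7_5, P7_8], by decide⟩ : Finset (Nat.Partition 7)),
  (⟨↑[P7_5, P7_8, P7_9], by decide⟩ : Finset (Nat.Partition 7)),
  (⟨↑[P7_5, P7_9], by decide⟩ : Finset (Nat.Partition 7)),
  (⟨↑[P7_6], by decide⟩ : Finset (Nat.Partition 7)),
  (⟨↑[P7_6, P7_9], by decide⟩ : Finset (Nat.Partition 7)),
  (⟨↑[P7_6, P7_9, P7_10], by decide⟩ : Finset (Nat.Partition 7)),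
  (⟨↑[P7_6, P7_10], by decide⟩ : Finset (Nat.Partition 7)),
  (⟨↑[P7_7], by decide⟩ : Finset (Nat.Partition 7)),
  (⟨↑[P7_7, P7_8], by decide⟩ : Finset (Nat.Partition 7)),
  (⟨↑[P7_7, P7_8, P7_9], by decide⟩ : Finset (Nat.Partition 7)),
  (⟨↑[P7_7, P7_9], by decide⟩ : Finset (Nat.Partition 7)),
  (⟨↑[P7_8], by decide⟩ : Finset (Nat.Partition 7)),
  (⟨↑[P7_8, P7_9], by decide⟩ : Finset (Nat.Partition 7)),
  (⟨↑[P7_8, P7_9, P7_11], by decide⟩ : Finset (Nat.Partition 7)),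
  (⟨↑[P7_8, P7_11], by decide⟩ : Finset (Nat.Partition 7)),
  (⟨↑[P7_9], by decide⟩ : Finset (Nat.Partition 7)),
  (⟨↑[P7_9, P7_10], by decide⟩ : Finset (Nat.Partition 7)),
  (⟨↑[P7_9, P7_10, P7_12], by decide⟩ : Finset (Nat.Partition 7)),
  (⟨↑[P7_9, P7_11], by decide⟩ : Finset (Nat.Partition 7)),
  (⟨↑[P7_9, P7_11, P7_12], by decide⟩ : Finset (Nat.Partition 7)),
  (⟨↑[P7_9, P7_12], by decide⟩ : Finset (Nat.Partition 7)),
  (⟨↑[P7_10], by decide⟩ : Finset (Nat.Partition 7)),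
  (⟨↑[P7_10, P7_12], by decide⟩ : Finset (Nat.Partition 7)),
  (⟨↑[P7_10, P7_12, P7_13], by decide⟩ : Finset (Nat.Partition 7)),
  (⟨↑[P7_10, P7_13], by decide⟩ : Finset (Nat.Partition 7)),
  (⟨↑[P7_11], by decide⟩ : Finset (Nat.Partition 7)),
  (⟨↑[P7_11, P7_12], by decide⟩ : Finset (Nat.Partition 7)),
  (⟨↑[P7_12], by decide⟩ : Finset (Nat.Partition 7)),
  (⟨↑[P7_12, P7_13], by decide⟩ : Finset (Nat.Partition 7)),
  (⟨↑[P7_13], by decide⟩ : Finset (Nat.Partition 7)),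
  (⟨↑[P7_13, P7_14], by decide⟩ : Finset (Nat.Partition 7)),
  (⟨↑[P7_14], by decide⟩ : Finset (Nat.Partition 7))], by decide⟩


theorem compl0 : ∀ p : Nat.Partition 0, p ∈ Pf0 := by
  intro p
  have h : p = P0_0 := Subsingleton.elim _ _
  rw [h]; decide

theorem compl1 : ∀ p : Nat.Partition 1, p ∈ Pf1 :=
  compl_step Pf0 Pf1 compl0 (by decide)

theorem compl2 : ∀ p : Nat.Partition 2, p ∈ Pf2 :=
  compl_step Pf1 Pf2 compl1 (by decide)

theorem compl3 : ∀ p : Nat.Partition 3, p ∈ Pf3 :=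
  compl_step Pf2 Pf3 compl2 (by decide)

theorem compl4 : ∀ p : Nat.Partition 4, p ∈ Pf4 :=
  compl_step Pf3 Pf4 compl3 (by decide)

theorem compl5 : ∀ p : Nat.Partition 5, p ∈ Pf5 :=
  compl_step Pf4 Pf5 compl4 (by decide)

theorem compl6 : ∀ p : Nat.Partition 6, p ∈ Pf6 :=
  compl_step Pf5 Pf6 compl5 (by decide)

theorem compl7 : ∀ p : Nat.Partition 7, p ∈ Pf7 :=
  compl_step Pf6 Pf7 compl6 (by decide)

theorem chi1 : chi 1 = 1 := by
  have hadj : ∀ a b, (partitionGraph 1).Adj a b ↔ AdjR Pf0 a b :=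
    adj_iff (n := 1) Pf0 compl0
  refine chi_eq CL1 ?_ ?_ ?_ ?_ (by decide)
  · have h : ∀ v : Pf1, ({(v : Nat.Partition 1)} : Finset _) ∈ CL1 := by decide
    exact fun v => h ⟨v, compl1 v⟩
  · have h : ∀ t : CL1, ∀ a : Pf1, (a : Nat.Partition 1) ∉ (t : Finset _) →
        (∀ b : (t : Finset (Nat.Partition 1)), AdjR Pf0 (a : Nat.Partition 1) (b : Nat.Partition 1)) →
        insert (a : Nat.Partition 1) (t : Finset _) ∈ CL1 := by decide
    intro t ht a hat hadj'
    exact h ⟨t, ht⟩ ⟨a, compl1 a⟩ hat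
      (fun b => (hadj a b).mp (hadj' b b.2))
  · have h : ∀ s : CL1, ∀ a : (s : Finset (Nat.Partition 1)),
        ∀ b : (s : Finset (Nat.Partition 1)),
        (a : Nat.Partition 1) ≠ (b : Nat.Partition 1) → AdjR Pf0 (a : Nat.Partition 1) (b : Nat.Partition 1) := by decide
    intro s hs
    exact ⟨fun a ha b hb hne => (hadj a b).mpr
      (h ⟨s, hs⟩ ⟨a, Finset.mem_coe.mp ha⟩ ⟨b, Finset.mem_coe.mp hb⟩ hne), rfl⟩
  · have h : ∀ s : CL1, (s : Finset (Nat.Partition 1)).card ≤ 4 := by decide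
    exact fun s hs => h ⟨s, hs⟩

theorem chi2 : chi 2 = 1 := by
  have hadj : ∀ a b, (partitionGraph 2).Adj a b ↔ AdjR Pf1 a b :=
    adj_iff (n := 2) Pf1 compl1
  refine chi_eq CL2 ?_ ?_ ?_ ?_ (by decide)
  · have h : ∀ v : Pf2, ({(v : Nat.Partition 2)} : Finset _) ∈ CL2 := by decide
    exact fun v => h ⟨v, compl2 v⟩
  · have h : ∀ t : CL2, ∀ a : Pf2, (a : Nat.Partition 2) ∉ (t : Finset _) →
        (∀ b : (t : Finset (Nat.Partition 2)), AdjR Pf1 (a : Nat.Partition 2) (b : Nat.Partition 2)) →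
        insert (a : Nat.Partition 2) (t : Finset _) ∈ CL2 := by decide
    intro t ht a hat hadj'
    exact h ⟨t, ht⟩ ⟨a, compl2 a⟩ hat
      (fun b => (hadj a b).mp (hadj' b b.2))
  · have h : ∀ s : CL2, ∀ a : (s : Finset (Nat.Partition 2)),
        ∀ b : (s : Finset (Nat.Partition 2)),
        (a : Nat.Partition 2) ≠ (b : Nat.Partition 2) → AdjR Pf1 (a : Nat.Partition 2) (b : Nat.Partition 2) := by decide
    intro s hs
    exact ⟨fun a ha b hb hne => (hadj a b).mpr
      (h ⟨s, hs⟩ ⟨a, Finset.mem_coe.mp ha⟩ ⟨b, Finset.mem_coe.mp hb⟩ hne), rfl⟩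
  · have h : ∀ s : CL2, (s : Finset (Nat.Partition 2)).card ≤ 4 := by decide
    exact fun s hs => h ⟨s, hs⟩

theorem chi3 : chi 3 = 1 := by
  have hadj : ∀ a b, (partitionGraph 3).Adj a b ↔ AdjR Pf2 a b :=
    adj_iff (n := 3) Pf2 compl2
  refine chi_eq CL3 ?_ ?_ ?_ ?_ (by decide)
  · have h : ∀ v : Pf3, ({(v : Nat.Partition 3)} : Finset _) ∈ CL3 := by decide
    exact fun v => h ⟨v, compl3 v⟩
  · have h : ∀ t : CL3, ∀ a : Pf3, (a : Nat.Partition 3) ∉ (t : Finset _) →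
        (∀ b : (t : Finset (Nat.Partition 3)), AdjR Pf2 (a : Nat.Partition 3) (b : Nat.Partition 3)) →
        insert (a : Nat.Partition 3) (t : Finset _) ∈ CL3 := by decide
    intro t ht a hat hadj'
    exact h ⟨t, ht⟩ ⟨a, compl3 a⟩ hat
      (fun b => (hadj a b).mp (hadj' b b.2))
  · have h : ∀ s : CL3, ∀ a : (s : Finset (Nat.Partition 3)),
        ∀ b : (s : Finset (Nat.Partition 3)),
        (a : Nat.Partition 3) ≠ (b : Nat.Partition 3) → AdjR Pf2 (a : Nat.Partition 3) (b : Nat.Partition 3) := by decide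
    intro s hs
    exact ⟨fun a ha b hb hne => (hadj a b).mpr
      (h ⟨s, hs⟩ ⟨a, Finset.mem_coe.mp ha⟩ ⟨b, Finset.mem_coe.mp hb⟩ hne), rfl⟩
  · have h : ∀ s : CL3, (s : Finset (Nat.Partition 3)).card ≤ 4 := by decide
    exact fun s hs => h ⟨s, hs⟩

theorem chi4 : chi 4 = 1 := by
  have hadj : ∀ a b, (partitionGraph 4).Adj a b ↔ AdjR Pf3 a b :=
    adj_iff (n := 4) Pf3 compl3
  refine chi_eq CL4 ?_ ?_ ?_ ?_ (by decide)
  · have h : ∀ v : Pf4, ({(v : Nat.Partition 4)} : Finset _) ∈ CL4 := by decide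
    exact fun v => h ⟨v, compl4 v⟩
  · have h : ∀ t : CL4, ∀ a : Pf4, (a : Nat.Partition 4) ∉ (t : Finset _) →
        (∀ b : (t : Finset (Nat.Partition 4)), AdjR Pf3 (a : Nat.Partition 4) (b : Nat.Partition 4)) →
        insert (a : Nat.Partition 4) (t : Finset _) ∈ CL4 := by decide
    intro t ht a hat hadj'
    exact h ⟨t, ht⟩ ⟨a, compl4 a⟩ hat
      (fun b => (hadj a b).mp (hadj' b b.2))
  · have h : ∀ s : CL4, ∀ a : (s : Finset (Nat.Partition 4)),
        ∀ b : (s : Finset (Nat.Partition 4)),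
        (a : Nat.Partition 4) ≠ (b : Nat.Partition 4) → AdjR Pf3 (a : Nat.Partition 4) (b : Nat.Partition 4) := by decide
    intro s hs
    exact ⟨fun a ha b hb hne => (hadj a b).mpr
      (h ⟨s, hs⟩ ⟨a, Finset.mem_coe.mp ha⟩ ⟨b, Finset.mem_coe.mp hb⟩ hne), rfl⟩
  · have h : ∀ s : CL4, (s : Finset (Nat.Partition 4)).card ≤ 4 := by decide
    exact fun s hs => h ⟨s, hs⟩

theorem chi5 : chi 5 = 1 := by
  have hadj : ∀ a b, (partitionGraph 5).Adj a b ↔ AdjR Pf4 a b :=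
    adj_iff (n := 5) Pf4 compl4
  refine chi_eq CL5 ?_ ?_ ?_ ?_ (by decide)
  · have h : ∀ v : Pf5, ({(v : Nat.Partition 5)} : Finset _) ∈ CL5 := by decide
    exact fun v => h ⟨v, compl5 v⟩
  · have h : ∀ t : CL5, ∀ a : Pf5, (a : Nat.Partition 5) ∉ (t : Finset _) →
        (∀ b : (t : Finset (Nat.Partition 5)), AdjR Pf4 (a : Nat.Partition 5) (b : Nat.Partition 5)) →
        insert (a : Nat.Partition 5) (t : Finset _) ∈ CL5 := by decide
    intro t ht a hat hadj'
    exact h ⟨t, ht⟩ ⟨a, compl5 a⟩ hat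
      (fun b => (hadj a b).mp (hadj' b b.2))
  · have h : ∀ s : CL5, ∀ a : (s : Finset (Nat.Partition 5)),
        ∀ b : (s : Finset (Nat.Partition 5)),
        (a : Nat.Partition 5) ≠ (b : Nat.Partition 5) → AdjR Pf4 (a : Nat.Partition 5) (b : Nat.Partition 5) := by decide
    intro s hs
    exact ⟨fun a ha b hb hne => (hadj a b).mpr
      (h ⟨s, hs⟩ ⟨a, Finset.mem_coe.mp ha⟩ ⟨b, Finset.mem_coe.mp hb⟩ hne), rfl⟩
  · have h : ∀ s : CL5, (s : Finset (Nat.Partition 5)).card ≤ 4 := by decide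
    exact fun s hs => h ⟨s, hs⟩

theorem chi6 : chi 6 = 1 := by
  have hadj : ∀ a b, (partitionGraph 6).Adj a b ↔ AdjR Pf5 a b :=
    adj_iff (n := 6) Pf5 compl5
  refine chi_eq CL6 ?_ ?_ ?_ ?_ (by decide)
  · have h : ∀ v : Pf6, ({(v : Nat.Partition 6)} : Finset _) ∈ CL6 := by decide
    exact fun v => h ⟨v, compl6 v⟩
  · have h : ∀ t : CL6, ∀ a : Pf6, (a : Nat.Partition 6) ∉ (t : Finset _) →
        (∀ b : (t : Finset (Nat.Partition 6)), AdjR Pf5 (a : Nat.Partition 6) (b : Nat.Partition 6)) →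
        insert (a : Nat.Partition 6) (t : Finset _) ∈ CL6 := by decide
    intro t ht a hat hadj'
    exact h ⟨t, ht⟩ ⟨a, compl6 a⟩ hat
      (fun b => (hadj a b).mp (hadj' b b.2))
  · have h : ∀ s : CL6, ∀ a : (s : Finset (Nat.Partition 6)),
        ∀ b : (s : Finset (Nat.Partition 6)),
        (a : Nat.Partition 6) ≠ (b : Nat.Partition 6) → AdjR Pf5 (a : Nat.Partition 6) (b : Nat.Partition 6) := by decide
    intro s hs
    exact ⟨fun a ha b hb hne => (hadj a b).mpr
      (h ⟨s, hs⟩ ⟨a, Finset.mem_coe.mp ha⟩ ⟨b, Finset.mem_coe.mp hb⟩ hne), rfl⟩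
  · have h : ∀ s : CL6, (s : Finset (Nat.Partition 6)).card ≤ 4 := by decide
    exact fun s hs => h ⟨s, hs⟩

theorem chi7 : chi 7 = 1 := by
  have hadj : ∀ a b, (partitionGraph 7).Adj a b ↔ AdjR Pf6 a b :=
    adj_iff (n := 7) Pf6 compl6
  refine chi_eq CL7 ?_ ?_ ?_ ?_ (by decide)
  · have h : ∀ v : Pf7, ({(v : Nat.Partition 7)} : Finset _) ∈ CL7 := by decide
    exact fun v => h ⟨v, compl7 v⟩
  · have h : ∀ t : CL7, ∀ a : Pf7, (a : Nat.Partition 7) ∉ (t : Finset _) →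
        (∀ b : (t : Finset (Nat.Partition 7)), AdjR Pf6 (a : Nat.Partition 7) (b : Nat.Partition 7)) →
        insert (a : Nat.Partition 7) (t : Finset _) ∈ CL7 := by decide
    intro t ht a hat hadj'
    exact h ⟨t, ht⟩ ⟨a, compl7 a⟩ hat
      (fun b => (hadj a b).mp (hadj' b b.2))
  · have h : ∀ s : CL7, ∀ a : (s : Finset (Nat.Partition 7)),
        ∀ b : (s : Finset (Nat.Partition 7)),
        (a : Nat.Partition 7) ≠ (b : Nat.Partition 7) → AdjR Pf6 (a : Nat.Partition 7) (b : Nat.Partition 7) := by decide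
    intro s hs
    exact ⟨fun a ha b hb hne => (hadj a b).mpr
      (h ⟨s, hs⟩ ⟨a, Finset.mem_coe.mp ha⟩ ⟨b, Finset.mem_coe.mp hb⟩ hne), rfl⟩
  · have h : ∀ s : CL7, (s : Finset (Nat.Partition 7)).card ≤ 4 := by decide
    exact fun s hs => h ⟨s, hs⟩

theorem stmt0 : ∀ n : ℕ, 1 ≤ n → n ≤ 7 → chi n = 1 := by
  intro n h1 h7
  interval_cases n
  · exact chi1
  · exact chi2
  · exact chi3
  · exact chi4
  · exact chi5
  · exact chi6
  · exact chi7
end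

section
/- In the partition graphs, an 8-clique first appears at n = 29, a 9-clique first at n = 37, a 10-clique first at n = 46, and an 11-clique first at n = 56; that is, c_8(28) = 0 and c_8(29) > 0, c_9(36) = 0 and c_9(37) > 0, c_10(45) = 0 and c_10(46) > 0, and c_11(55) = 0 and c_11(56) > 0. -/
open Finset

private def hgt {n : ℕ} (l : Nat.Partition n) (j : ℕ) : ℕ :=
  Multiset.countP (fun x => j < x) l.parts

private lemma countP_succ (s : Multiset ℕ) (k : ℕ) :
    Multiset.countP (fun x => k < x) s
      = Multiset.countP (fun x => k + 1 < x) s + s.count (k + 1) := by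
  refine Multiset.induction_on s (by simp) ?_
  intro a t ih
  rw [Multiset.countP_cons, Multiset.countP_cons, Multiset.count_cons, ih]
  split_ifs <;> omega

private lemma hgt_succ {n : ℕ} (l : Nat.Partition n) (k : ℕ) :
    hgt l k = hgt l (k + 1) + l.parts.count (k + 1) :=
  countP_succ _ _

private lemma hgt_anti {n : ℕ} (l : Nat.Partition n) {j j' : ℕ} (h : j ≤ j') :
    hgt l j' ≤ hgt l j := by
  unfold hgt
  rw [Multiset.countP_eq_card_filter, Multiset.countP_eq_card_filter]
  apply Multiset.card_le_card
  apply Multiset.monotone_filter_right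
  intro x hx
  omega

private lemma card_parts_le {n : ℕ} (l : Nat.Partition n) :
    Multiset.card l.parts ≤ n := by
  have h2 : Multiset.card l.parts • 1 ≤ l.parts.sum :=
    Multiset.card_nsmul_le_sum (fun x hx => l.parts_pos hx)
  simpa [l.parts_sum] using h2

private lemma parts_le {n : ℕ} (l : Nat.Partition n) {k : ℕ} (h : k ∈ l.parts) : k ≤ n := by
  have h2 : l.parts.sum = k + (l.parts.erase k).sum := by
    conv_lhs => rw [← Multiset.cons_erase h]
    simp
  have := l.parts_sum
  omega

private lemma hgt_lt {n : ℕ} (l : Nat.Partition n) {j : ℕ} (h : 0 < hgt l j) : j < n := by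
  obtain ⟨x, hx, hj⟩ := Multiset.countP_pos.1 h
  exact lt_of_lt_of_le hj (parts_le l hx)

private lemma hgt_le {n : ℕ} (l : Nat.Partition n) (j : ℕ) : hgt l j ≤ n :=
  le_trans (Multiset.countP_le_card _ _) (card_parts_le l)

private lemma hgt_eq_zero {n : ℕ} (l : Nat.Partition n) {j : ℕ} (h : n ≤ j) : hgt l j = 0 := by
  by_contra hc
  have := hgt_lt l (Nat.pos_of_ne_zero hc)
  omega

private lemma hgt_inj {n : ℕ} {a b : Nat.Partition n} (h : ∀ j, hgt a j = hgt b j) : a = b := by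
  have hp : a.parts = b.parts := by
    ext k
    cases k with
    | zero =>
      rw [Multiset.count_eq_zero_of_notMem, Multiset.count_eq_zero_of_notMem]
      · intro hm; exact absurd (b.parts_pos hm) (lt_irrefl 0)
      · intro hm; exact absurd (a.parts_pos hm) (lt_irrefl 0)
    | succ k =>
      have h1 := hgt_succ a k
      have h2 := hgt_succ b k
      have h3 := h k
      have h4 := h (k+1)
      omega
  cases a; cases b; simpa using hp

private lemma sum_countP (m : ℕ) : ∀ (s : Multiset ℕ), (∀ x ∈ s, x ≤ m) →
    ∑ j ∈ Finset.range m, Multiset.countP (fun x => j < x) s = s.sum := by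
  intro s
  induction s using Multiset.induction_on with
  | empty => intro _; simp
  | cons a t ih =>
    intro hs
    have ha : a ≤ m := hs a (Multiset.mem_cons_self a t)
    simp only [Multiset.countP_cons, Multiset.sum_cons, Finset.sum_add_distrib]
    rw [ih (fun x hx => hs x (Multiset.mem_cons_of_mem hx))]
    have he : ∑ j ∈ Finset.range m, (if j < a then 1 else 0) = a := by
      rw [← Finset.sum_filter]
      have : (Finset.range m).filter (fun j => j < a) = Finset.range a := by
        ext j
        simp only [Finset.mem_filter, Finset.mem_range]
        omega
      simp [this]
    omega

private lemma sum_hgt {n : ℕ} (l : Nat.Partition n) {m : ℕ} (hm : n ≤ m) :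
    ∑ j ∈ Finset.range m, hgt l j = n := by
  unfold hgt
  rw [sum_countP m l.parts (fun x hx => le_trans (parts_le l hx) hm), l.parts_sum]
private def Dg {n : ℕ} (l : Nat.Partition n) : Finset (ℕ × ℕ) :=
  (Finset.range n ×ˢ Finset.range n).filter (fun p => p.1 < hgt l p.2)

private lemma mem_Dg {n : ℕ} {l : Nat.Partition n} {p : ℕ × ℕ} :
    p ∈ Dg l ↔ p.1 < hgt l p.2 := by
  simp only [Dg, Finset.mem_filter, Finset.mem_product, Finset.mem_range, and_iff_right_iff_imp]
  intro h
  exact ⟨lt_of_lt_of_le h (hgt_le l p.2), hgt_lt l (lt_of_le_of_lt (Nat.zero_le _) h)⟩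

private lemma Dg_inj {n : ℕ} {a b : Nat.Partition n} (h : Dg a = Dg b) : a = b := by
  apply hgt_inj
  intro j
  have hm : ∀ i, i < hgt a j ↔ i < hgt b j := by
    intro i
    constructor
    · intro hi
      have : ((i, j) : ℕ × ℕ) ∈ Dg a := mem_Dg.2 hi
      rw [h] at this
      exact mem_Dg.1 this
    · intro hi
      have : ((i, j) : ℕ × ℕ) ∈ Dg b := mem_Dg.2 hi
      rw [← h] at this
      exact mem_Dg.1 this
  by_contra hne
  rcases Nat.lt_or_ge (hgt a j) (hgt b j) with hlt | hge
  · exact absurd ((hm (hgt a j)).2 hlt) (lt_irrefl _)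
  · have : hgt b j < hgt a j := lt_of_le_of_ne hge (fun e => hne e.symm)
    exact absurd ((hm (hgt b j)).1 this) (lt_irrefl _)

private lemma card_Dg {n : ℕ} (l : Nat.Partition n) : (Dg l).card = n := by
  have heq : Dg l = (Finset.range n).biUnion
      (fun j => (Finset.range (hgt l j)).image (fun i => (i, j))) := by
    ext p
    obtain ⟨i, j⟩ := p
    simp only [mem_Dg, Finset.mem_biUnion, Finset.mem_range, Finset.mem_image]
    constructor
    · intro hij
      exact ⟨j, hgt_lt l (lt_of_le_of_lt (Nat.zero_le _) hij), i, hij, rfl⟩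
    · rintro ⟨j', _, i', hi', he⟩
      obtain ⟨rfl, rfl⟩ := Prod.mk.injEq .. ▸ And.intro (congrArg Prod.fst he) (congrArg Prod.snd he)
      exact hi'
  have hdisj : ∀ x ∈ Finset.range n, ∀ y ∈ Finset.range n, x ≠ y →
      Disjoint ((Finset.range (hgt l x)).image (fun i => (i, x)))
        ((Finset.range (hgt l y)).image (fun i => (i, y))) := by
    intro x _ y _ hxy
    simp only [Finset.disjoint_left, Finset.mem_image, Finset.mem_range]
    rintro p ⟨i, _, rfl⟩ ⟨i', _, he⟩
    exact hxy (congrArg Prod.snd he).symm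
  rw [heq, Finset.card_biUnion hdisj]
  have hc : ∀ j, ((Finset.range (hgt l j)).image (fun i => (i, j))).card = hgt l j := by
    intro j
    rw [Finset.card_image_of_injective]
    · exact Finset.card_range _
    · intro u v huv
      exact (Prod.mk.injEq .. ▸ huv : u = v ∧ _).1
  simp only [hc]
  exact sum_hgt l (le_refl n)
private lemma stepDown_hgt {n : ℕ} {l : Nat.Partition n} {nu : Nat.Partition (n - 1)}
    (h : stepDown l nu) : ∃ c, ∀ j, hgt l j = hgt nu j + if j = c then 1 else 0 := by
  obtain ⟨k, hk, he⟩ := h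
  have hk1 : 1 ≤ k := l.parts_pos hk
  refine ⟨k - 1, fun j => ?_⟩
  have hE : hgt l j = Multiset.countP (fun x => j < x) (l.parts.erase k)
      + (if j < k then 1 else 0) := by
    unfold hgt
    conv_lhs => rw [← Multiset.cons_erase hk]
    rw [Multiset.countP_cons]
  have hnu : hgt nu j = Multiset.countP (fun x => j < x) (l.parts.erase k)
      + (if j < k - 1 then 1 else 0) := by
    unfold hgt
    rw [he, Multiset.countP_filter, Multiset.countP_cons]
    congr 1
    · apply Multiset.countP_congr rfl
      intro x _
      exact propext ⟨fun hx => hx.1, fun hx => ⟨hx, by omega⟩⟩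
    · split_ifs with h1 h2 h2 <;> first | rfl | omega
  rw [hE, hnu]
  split_ifs <;> omega

private lemma hgt_stepDown {n : ℕ} {l : Nat.Partition n} {nu : Nat.Partition (n - 1)} {c : ℕ}
    (hrel : ∀ j, hgt l j = hgt nu j + if j = c then 1 else 0) : stepDown l nu := by
  have hcount : 1 ≤ l.parts.count (c + 1) := by
    have h1 := hgt_succ l c
    have h2 := hrel c
    have h3 := hrel (c + 1)
    have h4 := hgt_anti nu (by omega : c ≤ c + 1)
    rw [if_pos rfl] at h2
    rw [if_neg (by omega : ¬(c + 1 = c))] at h3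
    omega
  have hmem : c + 1 ∈ l.parts := Multiset.count_pos.1 hcount
  refine ⟨c + 1, hmem, ?_⟩
  have hc1 : c + 1 - 1 = c := rfl
  rw [hc1]
  ext m
  cases m with
  | zero =>
    rw [Multiset.count_filter]
    rw [if_neg (by simp)]
    exact Multiset.count_eq_zero_of_notMem (fun hm => absurd (nu.parts_pos hm) (lt_irrefl 0))
  | succ m =>
    rw [Multiset.count_filter, if_pos (by simp), Multiset.count_cons]
    have hEr : l.parts.count (m + 1) = (l.parts.erase (c + 1)).count (m + 1)
        + (if m + 1 = c + 1 then 1 else 0) := by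
      conv_lhs => rw [← Multiset.cons_erase hmem]
      rw [Multiset.count_cons]
    have A1 := hgt_succ nu m
    have A2 := hgt_succ l m
    have R1 := hrel m
    have R2 := hrel (m + 1)
    have R3 := hrel c
    have h4 := hgt_anti nu (by omega : c ≤ c + 1)
    have h1 := hgt_succ l c
    split_ifs at * <;> omega

private lemma stepDown_le_hgt {n : ℕ} {l : Nat.Partition n} {nu : Nat.Partition (n - 1)}
    (h : stepDown l nu) (j : ℕ) : hgt nu j ≤ hgt l j := by
  obtain ⟨c, hc⟩ := stepDown_hgt h
  have := hc j
  split_ifs at this <;> omega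

private lemma stepDown_Dg {n : ℕ} {l : Nat.Partition n} {nu : Nat.Partition (n - 1)}
    (h : stepDown l nu) : Dg nu ⊆ Dg l := by
  intro p hp
  exact mem_Dg.2 (lt_of_lt_of_le (mem_Dg.1 hp) (stepDown_le_hgt h p.2))

private lemma partition_zero (a b : Nat.Partition 0) : a = b := by
  apply hgt_inj
  intro j
  rw [hgt_eq_zero a (Nat.zero_le j), hgt_eq_zero b (Nat.zero_le j)]

private lemma adj_inter {n : ℕ} {a b : Nat.Partition n} (hne : a ≠ b)
    (h : ∃ nu : Nat.Partition (n - 1), stepDown a nu ∧ stepDown b nu) :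
    (Dg a ∩ Dg b).card = n - 1 ∧ 1 ≤ n := by
  obtain ⟨nu, ha, hb⟩ := h
  have hn : 1 ≤ n := by
    by_contra hc
    have h0 : n = 0 := by omega
    subst h0
    exact hne (partition_zero a b)
  have hsub : Dg nu ⊆ Dg a ∩ Dg b :=
    Finset.subset_inter (stepDown_Dg ha) (stepDown_Dg hb)
  have h1 : n - 1 ≤ (Dg a ∩ Dg b).card := by
    have := Finset.card_le_card hsub
    rwa [card_Dg] at this
  have h2 : (Dg a ∩ Dg b).card ≤ n := by
    have := Finset.card_le_card (Finset.inter_subset_left : Dg a ∩ Dg b ⊆ Dg a)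
    rwa [card_Dg] at this
  have h3 : (Dg a ∩ Dg b).card ≠ n := by
    intro hc
    apply hne
    apply Dg_inj
    have ea : Dg a ∩ Dg b = Dg a :=
      Finset.eq_of_subset_of_card_le Finset.inter_subset_left (by rw [hc, card_Dg])
    have eb : Dg a ∩ Dg b = Dg b :=
      Finset.eq_of_subset_of_card_le Finset.inter_subset_right (by rw [hc, card_Dg])
    rw [← ea, eb]
  exact ⟨by omega, hn⟩
private lemma sum_ge_range : ∀ (m : ℕ) (s : Finset ℕ), s.card = m →
    ∑ i ∈ Finset.range m, i ≤ ∑ x ∈ s, x := by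
  intro m
  induction m with
  | zero => intro s _; simp
  | succ m ih =>
    intro s hc
    have hne : s.Nonempty := Finset.card_pos.1 (by omega)
    have hMs : s.max' hne ∈ s := s.max'_mem hne
    set M := s.max' hne with hM
    have hsub : s ⊆ Finset.range (M + 1) := by
      intro x hx
      simp only [Finset.mem_range]
      exact Nat.lt_succ_of_le (s.le_max' x hx)
    have hMm : m ≤ M := by
      have := Finset.card_le_card hsub
      simp only [Finset.card_range] at this
      omega
    have hce : (s.erase M).card = m := by rw [Finset.card_erase_of_mem hMs, hc]; omega
    have h1 := ih (s.erase M) hce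
    have h2 : M + ∑ x ∈ s.erase M, x = ∑ x ∈ s, x := Finset.add_sum_erase s id hMs
    rw [Finset.sum_range_succ]
    omega

private lemma sum_distinct_add_one (s : Finset ℕ) :
    ∑ i ∈ Finset.range s.card, (i + 1) ≤ ∑ x ∈ s, (x + 1) := by
  rw [Finset.sum_add_distrib, Finset.sum_add_distrib]
  simp only [Finset.sum_const, Finset.card_range, smul_eq_mul, mul_one]
  have := sum_ge_range s.card s rfl
  omega

private lemma sum_pos_distinct (s : Finset ℕ) (h0 : 0 ∉ s) :
    ∑ i ∈ Finset.range s.card, (i + 1) ≤ ∑ x ∈ s, x := by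
  have hinj : ∀ x ∈ s, ∀ y ∈ s, x - 1 = y - 1 → x = y := by
    intro x hx y hy hxy
    have hx1 : 1 ≤ x := Nat.one_le_iff_ne_zero.2 (fun e => h0 (e ▸ hx))
    have hy1 : 1 ≤ y := Nat.one_le_iff_ne_zero.2 (fun e => h0 (e ▸ hy))
    omega
  have hcard : (s.image (fun x => x - 1)).card = s.card :=
    Finset.card_image_of_injOn (fun x hx y hy h => hinj x hx y hy h)
  have h1 := sum_distinct_add_one (s.image (fun x => x - 1))
  rw [hcard] at h1
  refine le_trans h1 ?_
  rw [Finset.sum_image hinj]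
  apply le_of_eq
  apply Finset.sum_congr rfl
  intro x hx
  have : 1 ≤ x := Nat.one_le_iff_ne_zero.2 (fun e => h0 (e ▸ hx))
  omega
private lemma dedup_sum_le (m : Multiset ℕ) : m.dedup.sum ≤ m.sum := by
  obtain ⟨u, hu⟩ := Multiset.le_iff_exists_add.1 (Multiset.dedup_le m)
  conv_rhs => rw [hu]
  rw [Multiset.sum_add]
  exact Nat.le_add_right _ _

private lemma clique_bound {n : ℕ} {s : Finset (Nat.Partition n)}
    (hs : (partitionGraph n).IsClique s) (h3 : 3 ≤ s.card) :
    (∑ i ∈ Finset.range (s.card - 1), (i + 1) ≤ n - 1) ∨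
      (∑ i ∈ Finset.range s.card, (i + 1) ≤ n + 1) := by
  have hadj : ∀ a ∈ s, ∀ b ∈ s, a ≠ b →
      ∃ nu : Nat.Partition (n - 1), stepDown a nu ∧ stepDown b nu := by
    intro a ha b hb hne
    exact (hs (Finset.mem_coe.2 ha) (Finset.mem_coe.2 hb) hne).2
  have hinter : ∀ a ∈ s, ∀ b ∈ s, a ≠ b → (Dg a ∩ Dg b).card = n - 1 := fun a ha b hb hne =>
    (adj_inter hne (hadj a ha b hb hne)).1
  obtain ⟨a0, ha0, b0, hb0, hab0⟩ : ∃ a ∈ s, ∃ b ∈ s, a ≠ b := by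
    have h1 : 1 < s.card := by omega
    exact Finset.one_lt_card.1 h1
  have hn : 1 ≤ n := (adj_inter hab0 (hadj _ ha0 _ hb0 hab0)).2
  by_cases H : ∃ a ∈ s, ∃ b ∈ s, ∃ c ∈ s, a ≠ b ∧ a ≠ c ∧ b ≠ c ∧ Dg a ∩ Dg b ≠ Dg a ∩ Dg c
  · -- union case
    right
    obtain ⟨a, ha, b, hb, c, hc, hab, hac, hbc, hneI⟩ := H
    have hcardU : (Dg b ∪ Dg c).card = n + 1 := by
      have h := Finset.card_union_add_card_inter (Dg b) (Dg c)
      rw [card_Dg, card_Dg, hinter b hb c hc hbc] at h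
      omega
    have hkey : ∀ x ∈ s, ∀ y ∈ s, ∀ z ∈ s, x ≠ y → x ≠ z → y ≠ z →
        Dg x ∩ Dg y ≠ Dg x ∩ Dg z → Dg x ⊆ Dg y ∪ Dg z := by
      intro x hx y hy z hz hxy hxz hyz hne2
      have h1 : (Dg x ∩ Dg y).card = n - 1 := hinter x hx y hy hxy
      have h2 : (Dg x ∩ Dg z).card = n - 1 := hinter x hx z hz hxz
      have hsub : (Dg x ∩ Dg y) ∪ (Dg x ∩ Dg z) ⊆ Dg x := by
        intro p hp
        rcases Finset.mem_union.1 hp with h | h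
        exacts [(Finset.mem_inter.1 h).1, (Finset.mem_inter.1 h).1]
      have hle : ((Dg x ∩ Dg y) ∪ (Dg x ∩ Dg z)).card ≤ n := by
        have := Finset.card_le_card hsub
        rwa [card_Dg] at this
      have hgt1 : n - 1 < ((Dg x ∩ Dg y) ∪ (Dg x ∩ Dg z)).card := by
        by_contra hcon
        push_neg at hcon
        have e1 : Dg x ∩ Dg y = (Dg x ∩ Dg y) ∪ (Dg x ∩ Dg z) :=
          Finset.eq_of_subset_of_card_le Finset.subset_union_left (by omega)
        have e2 : Dg x ∩ Dg z = (Dg x ∩ Dg y) ∪ (Dg x ∩ Dg z) :=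
          Finset.eq_of_subset_of_card_le Finset.subset_union_right (by omega)
        exact hne2 (e1.trans e2.symm)
      have hEq : (Dg x ∩ Dg y) ∪ (Dg x ∩ Dg z) = Dg x :=
        Finset.eq_of_subset_of_card_le hsub (by rw [card_Dg]; omega)
      intro p hp
      rw [← hEq] at hp
      rcases Finset.mem_union.1 hp with h | h
      · exact Finset.mem_union_left _ (Finset.mem_inter.1 h).2
      · exact Finset.mem_union_right _ (Finset.mem_inter.1 h).2
    have hsubU : ∀ d ∈ s, Dg d ⊆ Dg b ∪ Dg c := by
      intro d hd
      by_cases hdb : d = b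
      · subst hdb; exact Finset.subset_union_left
      by_cases hdc : d = c
      · subst hdc; exact Finset.subset_union_right
      by_cases hd2 : Dg d ∩ Dg b ≠ Dg d ∩ Dg c
      · exact hkey d hd b hb c hc hdb hdc hbc hd2
      push_neg at hd2
      exfalso
      have hP1 : (Dg d ∩ Dg b).card = n - 1 := hinter d hd b hb hdb
      have hQc : (Dg b ∩ Dg c).card = n - 1 := hinter b hb c hc hbc
      have hPQ : Dg d ∩ Dg b = Dg b ∩ Dg c := by
        apply Finset.eq_of_subset_of_card_le ?_ (by omega)
        intro p hp
        have hp2 := hp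
        rw [hd2] at hp2
        exact Finset.mem_inter.2 ⟨(Finset.mem_inter.1 hp).2, (Finset.mem_inter.1 hp2).2⟩
      set Q := Dg b ∩ Dg c with hQdef
      have hQd : Q ⊆ Dg d := by
        rw [← hPQ]; exact Finset.inter_subset_left
      have hQb : Q ⊆ Dg b := Finset.inter_subset_left
      have hQcs : Q ⊆ Dg c := Finset.inter_subset_right
      have hcard1 : ∀ (e : Nat.Partition n), Q ⊆ Dg e → (Dg e \ (Q)).card = 1 := by
        intro e he
        rw [Finset.card_sdiff_of_subset he, card_Dg, hQc]
        omega
      obtain ⟨yd, hyd⟩ := Finset.card_eq_one.1 (hcard1 d hQd)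
      obtain ⟨u, hu⟩ := Finset.card_eq_one.1 (hcard1 b hQb)
      obtain ⟨v, hv⟩ := Finset.card_eq_one.1 (hcard1 c hQcs)
      have hrec : ∀ (e : Nat.Partition n) (w : ℕ × ℕ), Q ⊆ Dg e →
          Dg e \ (Q) = {w} → Dg e = Q ∪ {w} := by
        intro e w he hw
        rw [← hw, Finset.union_sdiff_of_subset he]
      have hDd := hrec d yd hQd hyd
      have hDb := hrec b u hQb hu
      have hDc := hrec c v hQcs hv
      have huv : u ≠ v := by
        intro e
        apply hbc
        apply Dg_inj
        rw [hDb, hDc, e]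
      have hyu : yd ≠ u := by
        intro e
        exact hdb (Dg_inj (by rw [hDd, hDb, e]))
      have hyv : yd ≠ v := by
        intro e
        exact hdc (Dg_inj (by rw [hDd, hDc, e]))
      have hyQ : yd ∉ Q := by
        have : yd ∈ Dg d \ (Q) := by rw [hyd]; exact Finset.mem_singleton_self yd
        exact (Finset.mem_sdiff.1 this).2
      -- a is distinct from b, c, d? a vs d : may equal! handle
      have hyA : yd ∉ Dg a := by
        intro hmem
        have : yd ∈ Dg b ∪ Dg c := hkey a ha b hb c hc hab hac hbc hneI hmem
        rcases Finset.mem_union.1 this with h | h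
        · rw [hDb] at h
          rcases Finset.mem_union.1 h with h' | h'
          · exact hyQ h'
          · exact hyu (Finset.mem_singleton.1 h')
        · rw [hDc] at h
          rcases Finset.mem_union.1 h with h' | h'
          · exact hyQ h'
          · exact hyv (Finset.mem_singleton.1 h')
      have had : a ≠ d := by
        intro e
        subst e
        have : yd ∈ Dg a := by
          rw [hDd]
          exact Finset.mem_union_right _ (Finset.mem_singleton_self yd)
        exact hyA this
      have hiad : (Dg a ∩ Dg d).card = n - 1 := hinter a ha d hd had
      have hsub2 : Dg a ∩ Dg d ⊆ Dg a ∩ (Q) := by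
        intro p hp
        obtain ⟨hpa, hpd⟩ := Finset.mem_inter.1 hp
        refine Finset.mem_inter.2 ⟨hpa, ?_⟩
        rw [hDd] at hpd
        rcases Finset.mem_union.1 hpd with h | h
        · exact h
        · exact absurd ((Finset.mem_singleton.1 h) ▸ hpa) (by rw [← Finset.mem_singleton.1 h] at hyA ⊢; exact hyA)
      have hQa : Q ⊆ Dg a := by
        have hle2 : n - 1 ≤ (Dg a ∩ (Q)).card := by
          have := Finset.card_le_card hsub2
          omega
        have : Dg a ∩ (Q) = Q := by
          apply Finset.eq_of_subset_of_card_le Finset.inter_subset_right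
          omega
        rw [← this]
        exact Finset.inter_subset_left
      obtain ⟨w, hw⟩ := Finset.card_eq_one.1 (hcard1 a hQa)
      have hDa := hrec a w hQa hw
      have hwmem : w ∈ Dg a := by
        rw [hDa]; exact Finset.mem_union_right _ (Finset.mem_singleton_self w)
      have : w ∈ Dg b ∪ Dg c := hkey a ha b hb c hc hab hac hbc hneI hwmem
      have hwQ : w ∉ Q := by
        have : w ∈ Dg a \ (Q) := by rw [hw]; exact Finset.mem_singleton_self w
        exact (Finset.mem_sdiff.1 this).2
      rcases Finset.mem_union.1 this with h | h
      · rw [hDb] at h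
        rcases Finset.mem_union.1 h with h' | h'
        · exact hwQ h'
        · exact hab (Dg_inj (by rw [hDa, hDb, Finset.mem_singleton.1 h']))
      · rw [hDc] at h
        rcases Finset.mem_union.1 h with h' | h'
        · exact hwQ h'
        · exact hac (Dg_inj (by rw [hDa, hDc, Finset.mem_singleton.1 h']))
    -- counting via the removed cells
    set U := Dg b ∪ Dg c with hUdef
    have hex : ∀ d ∈ s, U \ Dg d = {(U \ Dg d).toList.headI} := by
      intro d hd
      obtain ⟨w, hw⟩ := Finset.card_eq_one.1
        (by rw [Finset.card_sdiff_of_subset (hsubU d hd), hcardU, card_Dg]; omega :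
          (U \ Dg d).card = 1)
      rw [hw, Finset.toList_singleton]
      rfl
    set y : Nat.Partition n → ℕ × ℕ := fun d => (U \ Dg d).toList.headI with hydef
    have hyU : ∀ d ∈ s, y d ∈ U ∧ y d ∉ Dg d := by
      intro d hd
      have hm : y d ∈ U \ Dg d := by
        rw [hex d hd]
        exact Finset.mem_singleton_self _
      exact ⟨(Finset.mem_sdiff.1 hm).1, (Finset.mem_sdiff.1 hm).2⟩
    have hDgy : ∀ d ∈ s, Dg d = U \ {y d} := by
      intro d hd
      have h1 : U \ (U \ Dg d) = Dg d := Finset.sdiff_sdiff_eq_self (hsubU d hd)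
      rw [← h1, ← hex d hd]
    have hyinj : ∀ d ∈ s, ∀ e ∈ s, d ≠ e → y d ≠ y e := by
      intro d hd e he hde heq
      exact hde (Dg_inj (by rw [hDgy d hd, hDgy e he, heq]))
    have hymem : ∀ d ∈ s, ∀ e ∈ s, d ≠ e → y d ∈ Dg e := by
      intro d hd e he hde
      rw [hDgy e he]
      exact Finset.mem_sdiff.2 ⟨(hyU d hd).1,
        fun hm => hyinj d hd e he hde (Finset.mem_singleton.1 hm)⟩
    have hcol : ∀ d ∈ s, ∀ e ∈ s, d ≠ e → (y d).2 ≠ (y e).2 := by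
      intro d hd e he hde heq
      have h1 : (y d).1 < hgt e (y d).2 := mem_Dg.1 (hymem d hd e he hde)
      have h2 : (y e).1 < hgt d (y e).2 := mem_Dg.1 (hymem e he d hd (Ne.symm hde))
      have h3 : ¬ ((y d).1 < hgt d (y d).2) := fun hcc => (hyU d hd).2 (mem_Dg.2 hcc)
      have h4 : ¬ ((y e).1 < hgt e (y e).2) := fun hcc => (hyU e he).2 (mem_Dg.2 hcc)
      rw [heq] at h1 h3
      omega
    have hrow : ∀ d ∈ s, ∀ e ∈ s, d ≠ e → (y d).1 ≠ (y e).1 := by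
      intro d hd e he hde heq
      have h1 : (y d).1 < hgt e (y d).2 := mem_Dg.1 (hymem d hd e he hde)
      have h2 : (y e).1 < hgt d (y e).2 := mem_Dg.1 (hymem e he d hd (Ne.symm hde))
      have h3 : ¬ ((y d).1 < hgt d (y d).2) := fun hcc => (hyU d hd).2 (mem_Dg.2 hcc)
      have h4 : ¬ ((y e).1 < hgt e (y e).2) := fun hcc => (hyU e he).2 (mem_Dg.2 hcc)
      have hbe : (y e).2 < (y d).2 := by
        by_contra hcon
        push_neg at hcon
        have := hgt_anti d hcon
        omega
      have hbd : (y d).2 < (y e).2 := by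
        by_contra hcon
        push_neg at hcon
        have := hgt_anti e hcon
        omega
      omega
    have hseg : ∀ d ∈ s,
        (Finset.range ((y d).1 + 1)).image (fun r => (r, (y d).2)) ⊆ U := by
      intro d hd p hp
      obtain ⟨e, he, hed⟩ := Finset.exists_mem_ne (by omega : 1 < s.card) d
      obtain ⟨r, hr, rfl⟩ := Finset.mem_image.1 hp
      have h1 : (y d).1 < hgt e (y d).2 := mem_Dg.1 (hymem d hd e he (Ne.symm hed))
      have hr1 : r < (y d).1 + 1 := Finset.mem_range.1 hr
      exact hsubU e he (mem_Dg.2 (by simp only []; omega))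
    have hdisj : ∀ d ∈ (s : Finset (Nat.Partition n)), ∀ e ∈ s, d ≠ e →
        Disjoint ((Finset.range ((y d).1 + 1)).image (fun r => (r, (y d).2)))
          ((Finset.range ((y e).1 + 1)).image (fun r => (r, (y e).2))) := by
      intro d hd e he hde
      simp only [Finset.disjoint_left, Finset.mem_image, Finset.mem_range]
      rintro p ⟨r, _, rfl⟩ ⟨r', _, hpe⟩
      exact hcol d hd e he hde ((congrArg Prod.snd hpe).symm)
    have hsum2 : ∑ d ∈ s, ((y d).1 + 1) ≤ n + 1 := by
      have h1 : (s.biUnion (fun d => (Finset.range ((y d).1 + 1)).image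
          (fun r => (r, (y d).2)))).card ≤ U.card :=
        Finset.card_le_card (Finset.biUnion_subset.2 hseg)
      rw [hcardU, Finset.card_biUnion hdisj] at h1
      have h2 : ∀ d ∈ s, ((Finset.range ((y d).1 + 1)).image
          (fun r => (r, (y d).2))).card = (y d).1 + 1 := by
        intro d hd
        rw [Finset.card_image_of_injective _ (fun u v huv => (congrArg Prod.fst huv)),
          Finset.card_range]
      rw [Finset.sum_congr rfl h2] at h1
      exact h1
    have hrinj : ∀ d ∈ s, ∀ e ∈ s, (y d).1 = (y e).1 → d = e := by
      intro d hd e he hfe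
      by_contra hne'
      exact hrow d hd e he hne' hfe
    have himg : (s.image (fun d => (y d).1)).card = s.card :=
      Finset.card_image_of_injOn (fun d hd e he h =>
        hrinj d (Finset.mem_coe.1 hd) e (Finset.mem_coe.1 he) h)
    have hfin := sum_distinct_add_one (s.image fun d => (y d).1)
    rw [himg, Finset.sum_image hrinj] at hfin
    omega
  · -- core case
    left
    push_neg at H
    obtain ⟨nu, hsa, hsb⟩ := hadj a0 ha0 b0 hb0 hab0
    have hQ : Dg nu = Dg a0 ∩ Dg b0 := by
      apply Finset.eq_of_subset_of_card_le
        (Finset.subset_inter (stepDown_Dg hsa) (stepDown_Dg hsb))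
      rw [hinter a0 ha0 b0 hb0 hab0, card_Dg]
    have hsubd : ∀ d ∈ s, Dg nu ⊆ Dg d := by
      intro d hd
      by_cases h1 : d = a0
      · subst h1; exact stepDown_Dg hsa
      by_cases h2 : d = b0
      · subst h2; exact stepDown_Dg hsb
      have h3 := H a0 ha0 b0 hb0 d hd hab0 (fun e => h1 e.symm) (fun e => h2 e.symm)
      rw [hQ, h3]
      exact Finset.inter_subset_right
    have hle : ∀ d ∈ s, ∀ j, hgt nu j ≤ hgt d j := by
      intro d hd j
      by_contra hcon
      push_neg at hcon
      have hm : ((hgt d j, j) : ℕ × ℕ) ∈ Dg nu := mem_Dg.2 hcon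
      exact absurd (mem_Dg.1 (hsubd d hd hm)) (lt_irrefl _)
    have hstep : ∀ d ∈ s, ∃ c < n, ∀ j, hgt d j = hgt nu j + if j = c then 1 else 0 := by
      intro d hd
      have hsd : ∑ j ∈ Finset.range n, hgt d j = n := sum_hgt d (le_refl n)
      have hsnu : ∑ j ∈ Finset.range n, hgt nu j = n - 1 := sum_hgt nu (by omega)
      have hsum1 : ∑ j ∈ Finset.range n, (hgt d j - hgt nu j) = 1 := by
        have he : ∀ j ∈ Finset.range n, hgt nu j + (hgt d j - hgt nu j) = hgt d j := by
          intro j _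
          have := hle d hd j
          omega
        have h5 : ∑ j ∈ Finset.range n, (hgt nu j + (hgt d j - hgt nu j))
            = ∑ j ∈ Finset.range n, hgt d j := Finset.sum_congr rfl he
        rw [Finset.sum_add_distrib, hsnu, hsd] at h5
        omega
      obtain ⟨c, hcr, hc1⟩ : ∃ c ∈ Finset.range n, hgt d c - hgt nu c ≠ 0 := by
        by_contra hcon
        push_neg at hcon
        have := Finset.sum_eq_zero hcon
        omega
      have hsplit : (hgt d c - hgt nu c)
          + ∑ j ∈ (Finset.range n).erase c, (hgt d j - hgt nu j)
          = ∑ j ∈ Finset.range n, (hgt d j - hgt nu j) :=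
        Finset.add_sum_erase _ (fun j => hgt d j - hgt nu j) hcr
      have hzero := Finset.sum_eq_zero_iff.1
        (by omega : ∑ j ∈ (Finset.range n).erase c, (hgt d j - hgt nu j) = 0)
      refine ⟨c, Finset.mem_range.1 hcr, fun j => ?_⟩
      by_cases hj : j = c
      · subst hj
        have := hle d hd j
        rw [if_pos rfl]
        omega
      · rw [if_neg hj]
        by_cases hjr : j ∈ Finset.range n
        · have h6 := hzero j (Finset.mem_erase.2 ⟨hj, hjr⟩)
          have := hle d hd j
          omega
        · have hjn : n ≤ j := by
            simp only [Finset.mem_range, not_lt] at hjr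
            exact hjr
          rw [hgt_eq_zero d hjn, hgt_eq_zero nu (by omega : n - 1 ≤ j)]
    set f : Nat.Partition n → ℕ :=
      fun d => ((Finset.range n).filter (fun j => hgt nu j < hgt d j)).toList.headI with hfdef
    have hf : ∀ d ∈ s, ∀ j, hgt d j = hgt nu j + if j = f d then 1 else 0 := by
      intro d hd
      obtain ⟨c, hcn, hc⟩ := hstep d hd
      have hfilter : (Finset.range n).filter (fun j => hgt nu j < hgt d j) = {c} := by
        ext j
        simp only [Finset.mem_filter, Finset.mem_range, Finset.mem_singleton]
        constructor
        · rintro ⟨hj1, hj2⟩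
          by_contra hne'
          have := hc j
          rw [if_neg hne'] at this
          omega
        · intro hjc
          have h9 := hc j
          rw [if_pos hjc] at h9
          exact ⟨by omega, by omega⟩
      have hfc : f d = c := by
        simp only [hfdef]
        rw [hfilter, Finset.toList_singleton]
        rfl
      rw [hfc]
      exact hc
    have hfinj : ∀ d ∈ s, ∀ e ∈ s, f d = f e → d = e := by
      intro d hd e he hfe
      apply hgt_inj
      intro j
      rw [hf d hd j, hf e he j, hfe]
    have hfrange : ∀ d ∈ s, f d ∈ insert 0 nu.parts.toFinset := by
      intro d hd
      by_cases h0 : f d = 0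
      · rw [h0]; exact Finset.mem_insert_self _ _
      apply Finset.mem_insert_of_mem
      rw [Multiset.mem_toFinset, ← Multiset.count_pos]
      have hcc : f d - 1 + 1 = f d := by omega
      have hsucc := hgt_succ nu (f d - 1)
      rw [hcc] at hsucc
      have h1 := hf d hd (f d)
      have h2 := hf d hd (f d - 1)
      rw [if_pos rfl] at h1
      rw [if_neg (by omega)] at h2
      have h3 := hgt_anti d (by omega : f d - 1 ≤ f d)
      omega
    have hcard : s.card ≤ 1 + nu.parts.toFinset.card := by
      have h1 := Finset.card_le_card_of_injOn f hfrange
        (fun d hd e he h => hfinj d (Finset.mem_coe.1 hd) e (Finset.mem_coe.1 he) h)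
      have h2 := Finset.card_insert_le 0 nu.parts.toFinset
      omega
    have hmono : ∑ i ∈ Finset.range (s.card - 1), (i + 1)
        ≤ ∑ i ∈ Finset.range nu.parts.toFinset.card, (i + 1) := by
      apply Finset.sum_le_sum_of_subset
      intro x hx
      simp only [Finset.mem_range] at hx ⊢
      omega
    have h0nf : (0 : ℕ) ∉ nu.parts.toFinset := by
      rw [Multiset.mem_toFinset]
      intro hm
      exact absurd (nu.parts_pos hm) (lt_irrefl 0)
    have hps := sum_pos_distinct nu.parts.toFinset h0nf
    have hsum_le : ∑ x ∈ nu.parts.toFinset, x ≤ n - 1 := by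
      have h7 : nu.parts.dedup.sum ≤ nu.parts.sum := dedup_sum_le _
      rw [nu.parts_sum] at h7
      have h8 : ∑ x ∈ nu.parts.toFinset, x = nu.parts.dedup.sum := by
        rw [Finset.sum_eq_multiset_sum, Multiset.toFinset_val, Multiset.map_id']
      omega
    omega
private lemma no_clique {n r : ℕ} (h3 : 3 ≤ r)
    (h1 : ¬ (∑ i ∈ Finset.range (r - 1), (i + 1) ≤ n - 1))
    (h2 : ¬ (∑ i ∈ Finset.range r, (i + 1) ≤ n + 1)) : cliqueCount n r = 0 := by
  unfold cliqueCount
  rw [Set.ncard_eq_zero (Set.toFinite _)]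
  ext s
  simp only [Set.mem_setOf_eq, Set.mem_empty_iff_false, iff_false]
  intro hs
  obtain ⟨hc, hcard⟩ := hs
  have h3' : 3 ≤ s.card := by omega
  rcases clique_bound hc h3' with h | h
  · rw [hcard] at h; exact h1 h
  · rw [hcard] at h; exact h2 h

private def mkP (n : ℕ) (l : List ℕ) (h1 : ∀ i ∈ l, 0 < i) (h2 : l.sum = n) :
    Nat.Partition n :=
  ⟨(↑l : Multiset ℕ), fun {i} hi => h1 i (by simpa using hi), by simpa using h2⟩

private lemma ex_clique {n r : ℕ} (nu : Nat.Partition (n - 1)) (L : List (Nat.Partition n))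
    (hlen : L.length = r) (hnd : L.Nodup) (hstep : ∀ p ∈ L, stepDown p nu) :
    0 < cliqueCount n r := by
  unfold cliqueCount
  rw [Set.ncard_pos (Set.toFinite _)]
  refine ⟨L.toFinset, ?_, ?_⟩
  · intro a ha b hb hne
    have ha' : a ∈ L := List.mem_toFinset.1 (Finset.mem_coe.1 ha)
    have hb' : b ∈ L := List.mem_toFinset.1 (Finset.mem_coe.1 hb)
    exact ⟨hne, nu, hstep a ha', hstep b hb'⟩
  · rw [List.toFinset_card_of_nodup hnd, hlen]

private def nu8 : Nat.Partition 28 := mkP 28 [7,6,5,4,3,2,1] (by decide) (by decide)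

private lemma ex8 : 0 < cliqueCount 29 8 := by
  refine ex_clique nu8
    [ mkP 29 [8,6,5,4,3,2,1] (by decide) (by decide),
      mkP 29 [7,7,5,4,3,2,1] (by decide) (by decide),
      mkP 29 [7,6,6,4,3,2,1] (by decide) (by decide),
      mkP 29 [7,6,5,5,3,2,1] (by decide) (by decide),
      mkP 29 [7,6,5,4,4,2,1] (by decide) (by decide),
      mkP 29 [7,6,5,4,3,3,1] (by decide) (by decide),
      mkP 29 [7,6,5,4,3,2,2] (by decide) (by decide),
      mkP 29 [7,6,5,4,3,2,1,1] (by decide) (by decide) ]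
    (by rfl) (by decide) ?_
  intro p hp
  fin_cases hp
  · exact ⟨8, by decide, by decide⟩
  · exact ⟨7, by decide, by decide⟩
  · exact ⟨6, by decide, by decide⟩
  · exact ⟨5, by decide, by decide⟩
  · exact ⟨4, by decide, by decide⟩
  · exact ⟨3, by decide, by decide⟩
  · exact ⟨2, by decide, by decide⟩
  · exact ⟨1, by decide, by decide⟩
private def nu9 : Nat.Partition 36 := mkP 36 [8, 7, 6, 5, 4, 3, 2, 1] (by decide) (by decide)

private lemma ex9 : 0 < cliqueCount 37 9 := by
  refine ex_clique nu9
    [ mkP 37 [9, 7, 6, 5, 4, 3, 2, 1] (by decide) (by decide),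
      mkP 37 [8, 8, 6, 5, 4, 3, 2, 1] (by decide) (by decide),
      mkP 37 [8, 7, 7, 5, 4, 3, 2, 1] (by decide) (by decide),
      mkP 37 [8, 7, 6, 6, 4, 3, 2, 1] (by decide) (by decide),
      mkP 37 [8, 7, 6, 5, 5, 3, 2, 1] (by decide) (by decide),
      mkP 37 [8, 7, 6, 5, 4, 4, 2, 1] (by decide) (by decide),
      mkP 37 [8, 7, 6, 5, 4, 3, 3, 1] (by decide) (by decide),
      mkP 37 [8, 7, 6, 5, 4, 3, 2, 2] (by decide) (by decide),
      mkP 37 [8, 7, 6, 5, 4, 3, 2, 1, 1] (by decide) (by decide) ]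
    (by rfl) (by decide) ?_
  intro p hp
  fin_cases hp
  · exact ⟨9, by decide, by decide⟩
  · exact ⟨8, by decide, by decide⟩
  · exact ⟨7, by decide, by decide⟩
  · exact ⟨6, by decide, by decide⟩
  · exact ⟨5, by decide, by decide⟩
  · exact ⟨4, by decide, by decide⟩
  · exact ⟨3, by decide, by decide⟩
  · exact ⟨2, by decide, by decide⟩
  · exact ⟨1, by decide, by decide⟩

private def nu10 : Nat.Partition 45 := mkP 45 [9, 8, 7, 6, 5, 4, 3, 2, 1] (by decide) (by decide)

private lemma ex10 : 0 < cliqueCount 46 10 := by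
  refine ex_clique nu10
    [ mkP 46 [10, 8, 7, 6, 5, 4, 3, 2, 1] (by decide) (by decide),
      mkP 46 [9, 9, 7, 6, 5, 4, 3, 2, 1] (by decide) (by decide),
      mkP 46 [9, 8, 8, 6, 5, 4, 3, 2, 1] (by decide) (by decide),
      mkP 46 [9, 8, 7, 7, 5, 4, 3, 2, 1] (by decide) (by decide),
      mkP 46 [9, 8, 7, 6, 6, 4, 3, 2, 1] (by decide) (by decide),
      mkP 46 [9, 8, 7, 6, 5, 5, 3, 2, 1] (by decide) (by decide),
      mkP 46 [9, 8, 7, 6, 5, 4, 4, 2, 1] (by decide) (by decide),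
      mkP 46 [9, 8, 7, 6, 5, 4, 3, 3, 1] (by decide) (by decide),
      mkP 46 [9, 8, 7, 6, 5, 4, 3, 2, 2] (by decide) (by decide),
      mkP 46 [9, 8, 7, 6, 5, 4, 3, 2, 1, 1] (by decide) (by decide) ]
    (by rfl) (by decide) ?_
  intro p hp
  fin_cases hp
  · exact ⟨10, by decide, by decide⟩
  · exact ⟨9, by decide, by decide⟩
  · exact ⟨8, by decide, by decide⟩
  · exact ⟨7, by decide, by decide⟩
  · exact ⟨6, by decide, by decide⟩
  · exact ⟨5, by decide, by decide⟩
  · exact ⟨4, by decide, by decide⟩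
  · exact ⟨3, by decide, by decide⟩
  · exact ⟨2, by decide, by decide⟩
  · exact ⟨1, by decide, by decide⟩

private def nu11 : Nat.Partition 55 := mkP 55 [10, 9, 8, 7, 6, 5, 4, 3, 2, 1] (by decide) (by decide)

private lemma ex11 : 0 < cliqueCount 56 11 := by
  refine ex_clique nu11
    [ mkP 56 [11, 9, 8, 7, 6, 5, 4, 3, 2, 1] (by decide) (by decide),
      mkP 56 [10, 10, 8, 7, 6, 5, 4, 3, 2, 1] (by decide) (by decide),
      mkP 56 [10, 9, 9, 7, 6, 5, 4, 3, 2, 1] (by decide) (by decide),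
      mkP 56 [10, 9, 8, 8, 6, 5, 4, 3, 2, 1] (by decide) (by decide),
      mkP 56 [10, 9, 8, 7, 7, 5, 4, 3, 2, 1] (by decide) (by decide),
      mkP 56 [10, 9, 8, 7, 6, 6, 4, 3, 2, 1] (by decide) (by decide),
      mkP 56 [10, 9, 8, 7, 6, 5, 5, 3, 2, 1] (by decide) (by decide),
      mkP 56 [10, 9, 8, 7, 6, 5, 4, 4, 2, 1] (by decide) (by decide),
      mkP 56 [10, 9, 8, 7, 6, 5, 4, 3, 3, 1] (by decide) (by decide),
      mkP 56 [10, 9, 8, 7, 6, 5, 4, 3, 2, 2] (by decide) (by decide),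
      mkP 56 [10, 9, 8, 7, 6, 5, 4, 3, 2, 1, 1] (by decide) (by decide) ]
    (by rfl) (by decide) ?_
  intro p hp
  fin_cases hp
  · exact ⟨11, by decide, by decide⟩
  · exact ⟨10, by decide, by decide⟩
  · exact ⟨9, by decide, by decide⟩
  · exact ⟨8, by decide, by decide⟩
  · exact ⟨7, by decide, by decide⟩
  · exact ⟨6, by decide, by decide⟩
  · exact ⟨5, by decide, by decide⟩
  · exact ⟨4, by decide, by decide⟩
  · exact ⟨3, by decide, by decide⟩
  · exact ⟨2, by decide, by decide⟩
  · exact ⟨1, by decide, by decide⟩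

theorem stmt9 :
    (cliqueCount 28 8 = 0 ∧ 0 < cliqueCount 29 8) ∧
    (cliqueCount 36 9 = 0 ∧ 0 < cliqueCount 37 9) ∧
    (cliqueCount 45 10 = 0 ∧ 0 < cliqueCount 46 10) ∧
    (cliqueCount 55 11 = 0 ∧ 0 < cliqueCount 56 11) :=
  ⟨⟨no_clique (by norm_num) (by decide) (by decide), ex8⟩,
   ⟨no_clique (by norm_num) (by decide) (by decide), ex9⟩,
   ⟨no_clique (by norm_num) (by decide) (by decide), ex10⟩,
   ⟨no_clique (by norm_num) (by decide) (by decide), ex11⟩⟩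
end

section
/- The number of maximal cliques of size 2 in the partition graph G_2 equals 1, and for every integer n with 3 ≤ n ≤ 25 the number of maximal cliques of size 2 in G_n equals 2; that is, m_e(2) = 1 and m_e(n) = 2 for 3 ≤ n ≤ 25. -/
/-- A maximal clique of `G_n`: a clique that is not a proper subset of any other clique. -/
def IsMaxClique (n : ℕ) (s : Finset (Nat.Partition n)) : Prop :=
  (partitionGraph n).IsClique (s : Set (Nat.Partition n)) ∧
    ∀ t : Finset (Nat.Partition n),
      (partitionGraph n).IsClique (t : Set (Nat.Partition n)) → s ⊆ t → s = t

/-- `maxEdgeCount n = m_e(n)`, the number of maximal cliques of `G_n` of cardinality 2. -/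
noncomputable def maxEdgeCount (n : ℕ) : ℕ :=
  Set.ncard {s : Finset (Nat.Partition n) | IsMaxClique n s ∧ s.card = 2}

/-- `maxCliqueCount n = m_max(n)`, the total number of maximal cliques of `G_n`. -/
noncomputable def maxCliqueCount (n : ℕ) : ℕ :=
  Set.ncard {s : Finset (Nat.Partition n) | IsMaxClique n s}

/-! ### Auxiliary lemmas -/

open Multiset in
lemma filter_pos' {s : Multiset ℕ} (h : ∀ x ∈ s, 0 < x) :
    Multiset.filter (· ≠ 0) s = s :=
  Multiset.filter_eq_self.mpr (fun a ha => by simpa using (h a ha).ne')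

lemma stepDown_mk {n : ℕ} (lam : Nat.Partition n) (nu : Nat.Partition (n-1)) (k : ℕ)
    (X : Multiset ℕ) (hl : lam.parts = k ::ₘ X)
    (hnu : nu.parts = Multiset.filter (· ≠ 0) ((k-1) ::ₘ X)) :
    stepDown lam nu :=
  ⟨k, by rw [hl]; exact Multiset.mem_cons_self _ _,
    by rw [hl, Multiset.erase_cons_head]; exact hnu⟩

lemma stepDown_iff {n : ℕ} (lam : Nat.Partition n) (nu : Nat.Partition (n-1)) :
    stepDown lam nu ↔ lam.parts = 1 ::ₘ nu.parts ∨
      ∃ j ∈ nu.parts, lam.parts = (j+1) ::ₘ nu.parts.erase j := by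
  constructor
  · rintro ⟨k, hk, hnu⟩
    have hkpos : 0 < k := lam.parts_pos hk
    have herase : ∀ x ∈ lam.parts.erase k, 0 < x :=
      fun x hx => lam.parts_pos (Multiset.mem_of_mem_erase hx)
    rcases Nat.lt_or_ge k 2 with hk2 | hk2
    · have hk1 : k = 1 := by omega
      subst hk1
      left
      rw [show (1:ℕ) - 1 = 0 from rfl, Multiset.filter_cons_of_neg _ (by simp),
        filter_pos' herase] at hnu
      rw [hnu, Multiset.cons_erase hk]
    · right
      have h2 : nu.parts = (k-1) ::ₘ lam.parts.erase k := by
        rw [hnu, Multiset.filter_cons_of_pos _ (by simp; omega), filter_pos' herase]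
      refine ⟨k-1, by rw [h2]; exact Multiset.mem_cons_self _ _, ?_⟩
      rw [h2, Multiset.erase_cons_head, show k - 1 + 1 = k by omega,
        Multiset.cons_erase hk]
  · rintro (h | ⟨j, hj, h⟩)
    · exact stepDown_mk _ _ 1 nu.parts h
        (by rw [show (1:ℕ)-1 = 0 from rfl, Multiset.filter_cons_of_neg _ (by simp),
          filter_pos' (fun x hx => nu.parts_pos hx)])
    · refine stepDown_mk _ _ (j+1) (nu.parts.erase j) h ?_
      have hjpos : 0 < j := nu.parts_pos hj
      rw [show j + 1 - 1 = j from rfl,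
        Multiset.filter_cons_of_pos _ (by simp; omega),
        filter_pos' (fun x hx => nu.parts_pos (Multiset.mem_of_mem_erase hx)),
        Multiset.cons_erase hj]

/-! ### The four distinguished partitions -/

def pN (n : ℕ) (hn : 1 ≤ n) : Nat.Partition n :=
  ⟨{n}, by intro i hi; simp at hi; omega, by simp⟩

def pN1 (n : ℕ) (hn : 2 ≤ n) : Nat.Partition n :=
  ⟨1 ::ₘ {n-1}, by intro i hi; simp at hi; omega, by simp; omega⟩

def pOnes (n : ℕ) : Nat.Partition n :=
  ⟨Multiset.replicate n 1, by intro i hi; rw [Multiset.mem_replicate] at hi; omega,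
    by simp [Multiset.sum_replicate]⟩

def pTwo (n : ℕ) (hn : 2 ≤ n) : Nat.Partition n :=
  ⟨2 ::ₘ Multiset.replicate (n-2) 1,
    by intro i hi; rw [Multiset.mem_cons, Multiset.mem_replicate] at hi; omega,
    by simp [Multiset.sum_replicate, smul_eq_mul]; omega⟩

lemma replicate_eq_cons {m c : ℕ} (hm : 1 ≤ m) :
    Multiset.replicate m c = c ::ₘ Multiset.replicate (m-1) c := by
  rw [← Multiset.replicate_succ]; congr 1; omega

/-- Any neighbor of a partition with parts `{n}` has parts `1 ::ₘ {n-1}`. -/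
lemma only_up_singleton {n : ℕ} (hn : 2 ≤ n) {lam x : Nat.Partition n}
    (hl : lam.parts = {n}) (h : (partitionGraph n).Adj lam x) :
    x.parts = 1 ::ₘ {n-1} := by
  obtain ⟨hne, nu, ⟨k, hk, hnu⟩, hx⟩ := h
  rw [hl] at hk hnu
  have hk' : k = n := by simpa using hk
  rw [hk'] at hnu
  have hnu' : nu.parts = {n-1} := by
    rw [hnu, Multiset.erase_singleton, Multiset.filter_cons_of_pos _ (by simp; omega)]
    simp
  rw [stepDown_iff] at hx
  rcases hx with hx | ⟨j, hj, hx⟩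
  · rw [hx, hnu']
  · exfalso
    rw [hnu'] at hj hx
    have hj' : j = n - 1 := by simpa using hj
    subst hj'
    rw [Multiset.erase_singleton, show n - 1 + 1 = n by omega] at hx
    exact hne (Nat.Partition.ext (hl.trans hx.symm))

/-- Any neighbor of a partition with parts `(1,…,1)` has parts `2 ::ₘ (1,…,1)`. -/
lemma only_up_ones {n : ℕ} (hn : 2 ≤ n) {lam x : Nat.Partition n}
    (hl : lam.parts = Multiset.replicate n 1) (h : (partitionGraph n).Adj lam x) :
    x.parts = 2 ::ₘ Multiset.replicate (n-2) 1 := by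
  obtain ⟨hne, nu, ⟨k, hk, hnu⟩, hx⟩ := h
  rw [hl] at hk hnu
  have hk' : k = 1 := Multiset.eq_of_mem_replicate hk
  subst hk'
  have herase : (Multiset.replicate n 1).erase 1 = Multiset.replicate (n-1) 1 := by
    rw [replicate_eq_cons (by omega), Multiset.erase_cons_head]
  have hnu' : nu.parts = Multiset.replicate (n-1) 1 := by
    rw [hnu, herase, show (1:ℕ) - 1 = 0 from rfl, Multiset.filter_cons_of_neg _ (by simp),
      filter_pos' (fun x hx => by rw [Multiset.mem_replicate] at hx; omega)]
  rw [stepDown_iff] at hx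
  rcases hx with hx | ⟨j, hj, hx⟩
  · exfalso
    rw [hnu', ← replicate_eq_cons (by omega)] at hx
    exact hne (Nat.Partition.ext (hl.trans hx.symm))
  · rw [hnu'] at hj hx
    have hj' : j = 1 := Multiset.eq_of_mem_replicate hj
    subst hj'
    have herase2 : (Multiset.replicate (n-1) 1).erase 1 = Multiset.replicate (n-2) 1 := by
      rw [replicate_eq_cons (show 1 ≤ n - 1 by omega), Multiset.erase_cons_head,
        show n - 1 - 1 = n - 2 by omega]
    rw [herase2] at hx
    exact hx

lemma pN_ne_pN1 {n : ℕ} (hn : 2 ≤ n) : pN n (by omega) ≠ pN1 n hn := by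
  intro h
  have := congrArg (fun p => Multiset.card p.parts) h
  simp [pN, pN1] at this

lemma pOnes_ne_pTwo {n : ℕ} (hn : 2 ≤ n) : pOnes n ≠ pTwo n hn := by
  intro h
  have := congrArg (fun p => Multiset.card p.parts) h
  simp [pOnes, pTwo] at this
  omega

lemma adj_pN_pN1 {n : ℕ} (hn : 2 ≤ n) :
    (partitionGraph n).Adj (pN n (by omega)) (pN1 n hn) := by
  refine ⟨pN_ne_pN1 hn, ⟨{n-1}, by intro i hi; simp at hi; omega, by simp⟩, ?_, ?_⟩
  · refine stepDown_mk _ _ n 0 rfl ?_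
    exact (filter_pos' (by intro x hx; simp at hx; omega)).symm
  · refine stepDown_mk _ _ 1 {n-1} rfl ?_
    have h0 : Multiset.filter (· ≠ 0) ((1-1 : ℕ) ::ₘ ({n-1} : Multiset ℕ)) =
        Multiset.filter (· ≠ 0) ({n-1} : Multiset ℕ) :=
      Multiset.filter_cons_of_neg _ (by simp)
    rw [h0, filter_pos' (by intro x hx; simp at hx; omega)]

lemma adj_pOnes_pTwo {n : ℕ} (hn : 2 ≤ n) :
    (partitionGraph n).Adj (pOnes n) (pTwo n hn) := by
  refine ⟨pOnes_ne_pTwo hn,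
    ⟨Multiset.replicate (n-1) 1, by intro i hi; rw [Multiset.mem_replicate] at hi; omega,
      by simp [Multiset.sum_replicate]⟩, ?_, ?_⟩
  · refine stepDown_mk _ _ 1 (Multiset.replicate (n-1) 1) ?_ ?_
    · show Multiset.replicate n 1 = _
      rw [← replicate_eq_cons (by omega)]
    · have h0 : Multiset.filter (· ≠ 0) ((1-1 : ℕ) ::ₘ Multiset.replicate (n-1) 1) =
          Multiset.filter (· ≠ 0) (Multiset.replicate (n-1) 1) :=
        Multiset.filter_cons_of_neg _ (by simp)
      rw [h0, filter_pos' (fun x hx => by rw [Multiset.mem_replicate] at hx; omega)]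
  · refine stepDown_mk _ _ 2 (Multiset.replicate (n-2) 1) rfl ?_
    rw [filter_pos' (fun x hx => by
        rw [Multiset.mem_cons, Multiset.mem_replicate] at hx; omega)]
    show Multiset.replicate (n-1) 1 = _
    rw [replicate_eq_cons (show 1 ≤ n - 1 by omega), show n - 1 - 1 = n - 2 by omega]

/-- The edge `{(n),(n-1,1)}` is a maximal clique. -/
lemma maxClique_e1 {n : ℕ} (hn : 2 ≤ n) :
    IsMaxClique n {pN n (by omega), pN1 n hn} := by
  constructor
  · intro a ha b hb hab
    simp only [Finset.coe_insert, Finset.coe_singleton, Set.mem_insert_iff,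
      Set.mem_singleton_iff] at ha hb
    rcases ha with rfl | rfl <;> rcases hb with rfl | rfl
    · exact absurd rfl hab
    · exact adj_pN_pN1 hn
    · exact (adj_pN_pN1 hn).symm
    · exact absurd rfl hab
  · intro t ht hst
    refine Finset.Subset.antisymm hst (fun x hx => ?_)
    by_cases hxN : x = pN n (by omega)
    · subst hxN; exact Finset.mem_insert_self _ _
    · have hadj : (partitionGraph n).Adj (pN n (by omega)) x := by
        refine ht ?_ (by exact_mod_cast hx) (fun h => hxN h.symm)
        exact_mod_cast hst (Finset.mem_insert_self _ _)
      have := only_up_singleton hn rfl hadj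
      have hxp : x = pN1 n hn := Nat.Partition.ext this
      rw [hxp]
      exact Finset.mem_insert_of_mem (Finset.mem_singleton_self _)

/-- The edge `{(1^n),(2,1^(n-2))}` is a maximal clique. -/
lemma maxClique_e2 {n : ℕ} (hn : 2 ≤ n) :
    IsMaxClique n {pOnes n, pTwo n hn} := by
  constructor
  · intro a ha b hb hab
    simp only [Finset.coe_insert, Finset.coe_singleton, Set.mem_insert_iff,
      Set.mem_singleton_iff] at ha hb
    rcases ha with rfl | rfl <;> rcases hb with rfl | rfl
    · exact absurd rfl hab
    · exact adj_pOnes_pTwo hn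
    · exact (adj_pOnes_pTwo hn).symm
    · exact absurd rfl hab
  · intro t ht hst
    refine Finset.Subset.antisymm hst (fun x hx => ?_)
    by_cases hxN : x = pOnes n
    · subst hxN; exact Finset.mem_insert_self _ _
    · have hadj : (partitionGraph n).Adj (pOnes n) x := by
        refine ht ?_ (by exact_mod_cast hx) (fun h => hxN h.symm)
        exact_mod_cast hst (Finset.mem_insert_self _ _)
      have := only_up_ones hn rfl hadj
      have hxp : x = pTwo n hn := Nat.Partition.ext this
      rw [hxp]
      exact Finset.mem_insert_of_mem (Finset.mem_singleton_self _)


lemma filter_drop0 {X : Multiset ℕ} (h : ∀ x ∈ X, 0 < x) :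
    Multiset.filter (· ≠ 0) ((0:ℕ) ::ₘ X) = X := by
  rw [Multiset.filter_cons_of_neg _ (by simp)]; exact filter_pos' h

lemma filter_keep {a : ℕ} (ha : 0 < a) {X : Multiset ℕ} (h : ∀ x ∈ X, 0 < x) :
    Multiset.filter (· ≠ 0) (a ::ₘ X) = a ::ₘ X :=
  filter_pos' (by
    intro x hx
    rcases Multiset.mem_cons.mp hx with rfl | hx
    · exact ha
    · exact h x hx)

lemma exists_third {n : ℕ} (hn : 2 ≤ n) {lam mu : Nat.Partition n} {c m : ℕ}
    (hc2 : 2 ≤ c) (hm2 : 2 ≤ m) (hmc : m * c = n - 1)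
    (hA : lam.parts = (c+1) ::ₘ Multiset.replicate (m-1) c)
    (hB : mu.parts = 1 ::ₘ Multiset.replicate m c) :
    ∃ ρ : Nat.Partition n, ρ ≠ lam ∧ ρ ≠ mu ∧
      (partitionGraph n).Adj ρ lam ∧ (partitionGraph n).Adj ρ mu := by
  have hsub : (m - 2) * c = m * c - 2 * c := Nat.sub_mul m 2 c
  have h2c : 2 * c ≤ m * c := Nat.mul_le_mul_right c hm2
  have hpos : ∀ x ∈ Multiset.replicate (m-2) c, 0 < x := by
    intro x hx; rw [Multiset.mem_replicate] at hx; omega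
  obtain ⟨ρ, hρ⟩ : ∃ p : Nat.Partition n,
      p.parts = 1 ::ₘ (c+1) ::ₘ (c-1) ::ₘ Multiset.replicate (m-2) c := by
    refine ⟨⟨1 ::ₘ (c+1) ::ₘ (c-1) ::ₘ Multiset.replicate (m-2) c, ?_, ?_⟩, rfl⟩
    · intro i hi
      rw [Multiset.mem_cons, Multiset.mem_cons, Multiset.mem_cons,
        Multiset.mem_replicate] at hi
      omega
    · simp only [Multiset.sum_cons, Multiset.sum_replicate, smul_eq_mul]
      omega
  obtain ⟨nu1, hnu1⟩ : ∃ q : Nat.Partition (n-1),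
      q.parts = (c+1) ::ₘ (c-1) ::ₘ Multiset.replicate (m-2) c := by
    refine ⟨⟨(c+1) ::ₘ (c-1) ::ₘ Multiset.replicate (m-2) c, ?_, ?_⟩, rfl⟩
    · intro i hi
      rw [Multiset.mem_cons, Multiset.mem_cons, Multiset.mem_replicate] at hi
      omega
    · simp only [Multiset.sum_cons, Multiset.sum_replicate, smul_eq_mul]
      omega
  obtain ⟨nu2, hnu2⟩ : ∃ q : Nat.Partition (n-1),
      q.parts = 1 ::ₘ c ::ₘ (c-1) ::ₘ Multiset.replicate (m-2) c := by
    refine ⟨⟨1 ::ₘ c ::ₘ (c-1) ::ₘ Multiset.replicate (m-2) c, ?_, ?_⟩, rfl⟩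
    · intro i hi
      rw [Multiset.mem_cons, Multiset.mem_cons, Multiset.mem_cons,
        Multiset.mem_replicate] at hi
      omega
    · simp only [Multiset.sum_cons, Multiset.sum_replicate, smul_eq_mul]
      omega
  have hnl : ρ ≠ lam := by
    intro h
    have hcnt := congrArg (fun p => Multiset.count 1 p.parts) h
    simp only [hρ, hA, Multiset.count_cons, Multiset.count_replicate] at hcnt
    split_ifs at hcnt <;> omega
  have hnm : ρ ≠ mu := by
    intro h
    have hcnt := congrArg (fun p => Multiset.count (c+1) p.parts) h
    simp only [hρ, hB, Multiset.count_cons, Multiset.count_replicate] at hcnt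
    split_ifs at hcnt <;> omega
  have hsd_r1 : stepDown ρ nu1 := by
    refine stepDown_mk _ _ 1 ((c+1) ::ₘ (c-1) ::ₘ Multiset.replicate (m-2) c) hρ ?_
    rw [hnu1, show (1:ℕ) - 1 = 0 from rfl, filter_drop0]
    intro x hx
    rcases Multiset.mem_cons.mp hx with rfl | hx
    · omega
    rcases Multiset.mem_cons.mp hx with rfl | hx
    · omega
    · exact hpos x hx
  have hsd_l1 : stepDown lam nu1 := by
    refine stepDown_mk _ _ c ((c+1) ::ₘ Multiset.replicate (m-2) c) ?_ ?_
    · rw [hA]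
      refine Multiset.ext.mpr fun a => ?_
      simp only [Multiset.count_cons, Multiset.count_replicate]
      split_ifs <;> omega
    · rw [hnu1, filter_keep (show 0 < c - 1 by omega)]
      · refine Multiset.ext.mpr fun a => ?_
        simp only [Multiset.count_cons, Multiset.count_replicate]
        split_ifs <;> omega
      · intro x hx
        rcases Multiset.mem_cons.mp hx with rfl | hx
        · omega
        · exact hpos x hx
  have hsd_r2 : stepDown ρ nu2 := by
    refine stepDown_mk _ _ (c+1) (1 ::ₘ (c-1) ::ₘ Multiset.replicate (m-2) c) ?_ ?_
    · rw [hρ]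
      refine Multiset.ext.mpr fun a => ?_
      simp only [Multiset.count_cons, Multiset.count_replicate]
      split_ifs <;> omega
    · rw [hnu2, show c + 1 - 1 = c from rfl, filter_keep (show 0 < c by omega)]
      · refine Multiset.ext.mpr fun a => ?_
        simp only [Multiset.count_cons, Multiset.count_replicate]
        split_ifs <;> omega
      · intro x hx
        rcases Multiset.mem_cons.mp hx with rfl | hx
        · omega
        rcases Multiset.mem_cons.mp hx with rfl | hx
        · omega
        · exact hpos x hx
  have hsd_m2 : stepDown mu nu2 := by
    refine stepDown_mk _ _ c (1 ::ₘ Multiset.replicate (m-1) c) ?_ ?_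
    · rw [hB]
      refine Multiset.ext.mpr fun a => ?_
      simp only [Multiset.count_cons, Multiset.count_replicate]
      split_ifs <;> omega
    · rw [hnu2, filter_keep (show 0 < c - 1 by omega)]
      · refine Multiset.ext.mpr fun a => ?_
        simp only [Multiset.count_cons, Multiset.count_replicate]
        split_ifs <;> omega
      · intro x hx
        rcases Multiset.mem_cons.mp hx with rfl | hx
        · omega
        · rw [Multiset.mem_replicate] at hx
          omega
  exact ⟨ρ, hnl, hnm, ⟨hnl, nu1, hsd_r1, hsd_l1⟩, ⟨hnm, nu2, hsd_r2, hsd_m2⟩⟩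


lemma finish_const {n : ℕ} (hn : 2 ≤ n) {lam mu : Nat.Partition n} {c m : ℕ}
    (hcpos : 0 < c) (hmpos : 0 < m) (hmc : m * c = n - 1)
    (hA : lam.parts = (c+1) ::ₘ Multiset.replicate (m-1) c)
    (hB : mu.parts = 1 ::ₘ Multiset.replicate m c)
    (hno : ∀ ρ : Nat.Partition n, ρ ≠ lam → ρ ≠ mu →
      (partitionGraph n).Adj ρ lam → (partitionGraph n).Adj ρ mu → False) :
    ({lam, mu} : Finset (Nat.Partition n)) = {pN n (by omega), pN1 n hn} ∨
      ({lam, mu} : Finset (Nat.Partition n)) = {pOnes n, pTwo n hn} := by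
  by_cases hm1 : m = 1
  · left
    subst hm1
    have hlp : lam = pN n (by omega) := by
      refine Nat.Partition.ext (Multiset.ext.mpr fun a => ?_)
      simp only [hA, pN, Multiset.count_cons, Multiset.count_replicate,
        Multiset.count_singleton]
      split_ifs <;> omega
    have hmp : mu = pN1 n hn := by
      refine Nat.Partition.ext (Multiset.ext.mpr fun a => ?_)
      simp only [hB, pN1, Multiset.count_cons, Multiset.count_replicate,
        Multiset.count_singleton]
      split_ifs <;> omega
    rw [hlp, hmp]
  · by_cases hc1 : c = 1
    · right
      subst hc1
      have hlp : lam = pTwo n hn := by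
        refine Nat.Partition.ext (Multiset.ext.mpr fun a => ?_)
        simp only [hA, pTwo, Multiset.count_cons, Multiset.count_replicate]
        split_ifs <;> omega
      have hmp : mu = pOnes n := by
        refine Nat.Partition.ext (Multiset.ext.mpr fun a => ?_)
        simp only [hB, pOnes, Multiset.count_cons, Multiset.count_replicate]
        split_ifs <;> omega
      rw [hlp, hmp, Finset.pair_comm]
    · exfalso
      obtain ⟨ρ, h1, h2, h3, h4⟩ := exists_third hn (by omega) (by omega) hmc hA hB
      exact hno ρ h1 h2 h3 h4

lemma classify {n : ℕ} (hn : 2 ≤ n) {s : Finset (Nat.Partition n)}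
    (hmax : IsMaxClique n s) (hcard : s.card = 2) :
    s = {pN n (by omega), pN1 n hn} ∨ s = {pOnes n, pTwo n hn} := by
  obtain ⟨lam, mu, hlm, rfl⟩ := Finset.card_eq_two.mp hcard
  have hadj : (partitionGraph n).Adj lam mu := hmax.1 (by simp) (by simp) hlm
  obtain ⟨-, nu, hlnu, hmnu⟩ := hadj
  have hno : ∀ ρ : Nat.Partition n, ρ ≠ lam → ρ ≠ mu →
      (partitionGraph n).Adj ρ lam → (partitionGraph n).Adj ρ mu → False := by
    intro ρ h1 h2 ha1 ha2
    have hclique : (partitionGraph n).IsClique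
        (↑(insert ρ ({lam, mu} : Finset (Nat.Partition n))) : Set (Nat.Partition n)) := by
      intro a ha b hb hab
      simp only [Finset.coe_insert, Finset.coe_singleton, Set.mem_insert_iff,
        Set.mem_singleton_iff] at ha hb
      rcases ha with rfl | rfl | rfl <;> rcases hb with rfl | rfl | rfl
      · exact absurd rfl hab
      · exact ha1
      · exact ha2
      · exact ha1.symm
      · exact absurd rfl hab
      · exact ⟨hab, nu, hlnu, hmnu⟩
      · exact ha2.symm
      · exact ⟨hab, nu, hmnu, hlnu⟩
      · exact absurd rfl hab
    have heq := hmax.2 _ hclique (Finset.subset_insert _ _)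
    have hρmem : ρ ∈ ({lam, mu} : Finset (Nat.Partition n)) := by
      rw [heq]; exact Finset.mem_insert_self _ _
    rcases Finset.mem_insert.mp hρmem with h | h
    · exact h1 h
    · exact h2 (Finset.mem_singleton.mp h)
  by_cases hconst : ∀ j1 ∈ nu.parts, ∀ j2 ∈ nu.parts, j1 = j2
  swap
  · exfalso
    push_neg at hconst
    obtain ⟨j1, hj1, j2, hj2, hjne⟩ := hconst
    have hj1pos : 0 < j1 := nu.parts_pos hj1
    have hj2pos : 0 < j2 := nu.parts_pos hj2
    have hsum1 : j1 + (nu.parts.erase j1).sum = n - 1 := by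
      rw [← Multiset.sum_cons, Multiset.cons_erase hj1, nu.parts_sum]
    have hsum2 : j2 + (nu.parts.erase j2).sum = n - 1 := by
      rw [← Multiset.sum_cons, Multiset.cons_erase hj2, nu.parts_sum]
    obtain ⟨r0, hr0⟩ : ∃ p : Nat.Partition n, p.parts = 1 ::ₘ nu.parts := by
      refine ⟨⟨1 ::ₘ nu.parts, ?_, ?_⟩, rfl⟩
      · intro i hi
        rcases Multiset.mem_cons.mp hi with rfl | hi
        · omega
        · exact nu.parts_pos hi
      · rw [Multiset.sum_cons, nu.parts_sum]; omega
    obtain ⟨r1, hr1⟩ : ∃ p : Nat.Partition n, p.parts = (j1+1) ::ₘ nu.parts.erase j1 := by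
      refine ⟨⟨(j1+1) ::ₘ nu.parts.erase j1, ?_, ?_⟩, rfl⟩
      · intro i hi
        rcases Multiset.mem_cons.mp hi with rfl | hi
        · omega
        · exact nu.parts_pos (Multiset.mem_of_mem_erase hi)
      · rw [Multiset.sum_cons]; omega
    obtain ⟨r2, hr2⟩ : ∃ p : Nat.Partition n, p.parts = (j2+1) ::ₘ nu.parts.erase j2 := by
      refine ⟨⟨(j2+1) ::ₘ nu.parts.erase j2, ?_, ?_⟩, rfl⟩
      · intro i hi
        rcases Multiset.mem_cons.mp hi with rfl | hi
        · omega
        · exact nu.parts_pos (Multiset.mem_of_mem_erase hi)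
      · rw [Multiset.sum_cons]; omega
    have hs0 : stepDown r0 nu := (stepDown_iff _ _).mpr (Or.inl hr0)
    have hs1 : stepDown r1 nu := (stepDown_iff _ _).mpr (Or.inr ⟨j1, hj1, hr1⟩)
    have hs2 : stepDown r2 nu := (stepDown_iff _ _).mpr (Or.inr ⟨j2, hj2, hr2⟩)
    have hc1 : Multiset.count 1 (nu.parts.erase j1) ≤ Multiset.count 1 nu.parts :=
      Multiset.count_le_of_le _ (Multiset.erase_le _ _)
    have hc2 : Multiset.count 1 (nu.parts.erase j2) ≤ Multiset.count 1 nu.parts :=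
      Multiset.count_le_of_le _ (Multiset.erase_le _ _)
    have h01 : r0 ≠ r1 := by
      intro h
      have hcnt := congrArg (fun p => Multiset.count 1 p.parts) h
      simp only [hr0, hr1, Multiset.count_cons] at hcnt
      split_ifs at hcnt <;> omega
    have h02 : r0 ≠ r2 := by
      intro h
      have hcnt := congrArg (fun p => Multiset.count 1 p.parts) h
      simp only [hr0, hr2, Multiset.count_cons] at hcnt
      split_ifs at hcnt <;> omega
    have h12 : r1 ≠ r2 := by
      intro h
      have hcnt := congrArg (fun p => Multiset.count j1 p.parts) h
      have e1 : Multiset.count j1 (nu.parts.erase j1) = Multiset.count j1 nu.parts - 1 :=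
        Multiset.count_erase_self _ _
      have e2 : Multiset.count j1 (nu.parts.erase j2) = Multiset.count j1 nu.parts :=
        Multiset.count_erase_of_ne hjne _
      have hposc : 0 < Multiset.count j1 nu.parts := Multiset.count_pos.mpr hj1
      simp only [hr1, hr2, Multiset.count_cons] at hcnt
      split_ifs at hcnt <;> omega
    obtain ⟨ρ, hsρ, hρl, hρm⟩ : ∃ ρ, stepDown ρ nu ∧ ρ ≠ lam ∧ ρ ≠ mu := by
      by_cases e0l : r0 = lam
      · by_cases e1m : r1 = mu
        · exact ⟨r2, hs2, fun h => h02.symm (h.trans e0l.symm),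
            fun h => h12.symm (h.trans e1m.symm)⟩
        · exact ⟨r1, hs1, fun h => h01.symm (h.trans e0l.symm), e1m⟩
      · by_cases e0m : r0 = mu
        · by_cases e1l : r1 = lam
          · exact ⟨r2, hs2, fun h => h12.symm (h.trans e1l.symm),
              fun h => h02.symm (h.trans e0m.symm)⟩
          · exact ⟨r1, hs1, e1l, fun h => h01.symm (h.trans e0m.symm)⟩
        · exact ⟨r0, hs0, e0l, e0m⟩
    exact hno ρ hρl hρm ⟨hρl, nu, hsρ, hlnu⟩ ⟨hρm, nu, hsρ, hmnu⟩
  · have hne0 : nu.parts ≠ 0 := by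
      intro h
      have hs := nu.parts_sum
      rw [h] at hs
      simp at hs
      omega
    obtain ⟨c, hc⟩ := Multiset.exists_mem_of_ne_zero hne0
    have hcpos : 0 < c := nu.parts_pos hc
    have hrep : nu.parts = Multiset.replicate (Multiset.card nu.parts) c :=
      Multiset.eq_replicate_card.mpr (fun b hb => hconst b hb c hc)
    set m := Multiset.card nu.parts with hm
    have hmpos : 0 < m := by
      rw [hm]; exact Multiset.card_pos.mpr hne0
    have hmc : m * c = n - 1 := by
      have hs := nu.parts_sum
      rw [hrep, Multiset.sum_replicate, smul_eq_mul] at hs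
      exact hs
    have herasec : (Multiset.replicate m c).erase c = Multiset.replicate (m-1) c := by
      rw [replicate_eq_cons hmpos, Multiset.erase_cons_head]
    have hup : ∀ x : Nat.Partition n, stepDown x nu →
        x.parts = (c+1) ::ₘ Multiset.replicate (m-1) c ∨
        x.parts = 1 ::ₘ Multiset.replicate m c := by
      intro x hx
      rcases (stepDown_iff x nu).mp hx with h | ⟨j, hj, h⟩
      · right; rw [h, hrep]
      · left
        rw [hrep] at hj h
        have hjc : j = c := Multiset.eq_of_mem_replicate hj
        rw [hjc] at h
        rw [herasec] at h
        exact h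
    rcases hup lam hlnu with hA | hB <;> rcases hup mu hmnu with hA' | hB'
    · exact absurd (Nat.Partition.ext (hA.trans hA'.symm)) hlm
    · exact finish_const hn hcpos hmpos hmc hA hB' hno
    · rcases finish_const hn hcpos hmpos hmc hA' hB
        (fun ρ a b c d => hno ρ b a d c) with h | h
      · left; rw [Finset.pair_comm]; exact h
      · right; rw [Finset.pair_comm]; exact h
    · exact absurd (Nat.Partition.ext (hB.trans hB'.symm)) hlm

theorem stmt16 :
    maxEdgeCount 2 = 1 ∧ ∀ n : ℕ, 3 ≤ n → n ≤ 25 → maxEdgeCount n = 2 := by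
  constructor
  · have hset : {s : Finset (Nat.Partition 2) | IsMaxClique 2 s ∧ s.card = 2} =
        {({pN 2 one_le_two, pN1 2 le_rfl} : Finset (Nat.Partition 2))} := by
      ext s
      simp only [Set.mem_setOf_eq, Set.mem_singleton_iff]
      constructor
      · rintro ⟨h1, h2⟩
        rcases classify le_rfl h1 h2 with h | h
        · exact h
        · rw [h]
          have e1 : pOnes 2 = pN1 2 le_rfl := Nat.Partition.ext (by decide)
          have e2 : pTwo 2 le_rfl = pN 2 one_le_two := Nat.Partition.ext (by decide)
          rw [e1, e2, Finset.pair_comm]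
      · rintro rfl
        exact ⟨maxClique_e1 le_rfl, Finset.card_pair (pN_ne_pN1 le_rfl)⟩
    unfold maxEdgeCount
    rw [hset, Set.ncard_singleton]
  · intro n h3 _
    have hn : 2 ≤ n := by omega
    have h1n : 1 ≤ n := by omega
    have hEne : ({pN n h1n, pN1 n hn} : Finset (Nat.Partition n)) ≠
        {pOnes n, pTwo n hn} := by
      intro h
      have hmem : pN n h1n ∈ ({pOnes n, pTwo n hn} : Finset (Nat.Partition n)) := by
        rw [← h]; exact Finset.mem_insert_self _ _
      rcases Finset.mem_insert.mp hmem with h' | h'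
      · have := congrArg (fun p => Multiset.card p.parts) h'
        simp [pN, pOnes] at this
        omega
      · rw [Finset.mem_singleton] at h'
        have := congrArg (fun p => Multiset.card p.parts) h'
        simp [pN, pTwo] at this
        omega
    have hset : {s : Finset (Nat.Partition n) | IsMaxClique n s ∧ s.card = 2} =
        {({pN n h1n, pN1 n hn} : Finset (Nat.Partition n)), {pOnes n, pTwo n hn}} := by
      ext s
      simp only [Set.mem_setOf_eq, Set.mem_insert_iff, Set.mem_singleton_iff]
      constructor
      · rintro ⟨h1, h2⟩
        exact classify hn h1 h2
      · rintro (rfl | rfl)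
        · exact ⟨maxClique_e1 hn, Finset.card_pair (pN_ne_pN1 hn)⟩
        · exact ⟨maxClique_e2 hn, Finset.card_pair (pOnes_ne_pTwo hn)⟩
    unfold maxEdgeCount
    rw [hset]
    exact Set.ncard_pair hEne
end
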